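/- arXiv:2110.14062 — 2 statements merged into one kernel-verified Lean document; each statement's English description precedes it below -/
import Mathlib

section
/- Let P ⊆ ℝⁿ be a polytope oriented by v ∈ ℝⁿ. If (F,G) ∈ F^φ, then top(F) ≤ bot(G) in the partial order induced by v on the vertices of P. -/
open scoped BigOperators

noncomputable section

/-- Vectors in `ℝⁿ`. -/
abbrev Vec (n : ℕ) := Fin n → ℝ

/-- The standard scalar product on `ℝⁿ`. -/
def dot {n : ℕ} (x y : Vec n) : ℝ := ∑ i, x i * y i

/-- A polytope is the convex hull of a finite set of points. -/
def IsPolytope {n : ℕ} (P : Set (Vec n)) : Prop :=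
  ∃ S : Finset (Vec n), P = convexHull ℝ (S : Set (Vec n))

/-- A face of `P`: either `P` itself (take `c = 0`) or the subset of `P` where some linear
functional attains its maximum over `P`. -/
def IsFace {n : ℕ} (P F : Set (Vec n)) : Prop :=
  ∃ c : Vec n, F = {x ∈ P | ∀ y ∈ P, dot c y ≤ dot c x}

/-- Dimension of a subset of `ℝⁿ`: the rank of the direction of its affine span. -/
noncomputable def sdim {n : ℕ} (A : Set (Vec n)) : ℕ :=
  Module.finrank ℝ (affineSpan ℝ A).direction

/-- The normal cone of a face `F` of `P`. -/
def normalCone {n : ℕ} (P F : Set (Vec n)) : Set (Vec n) :=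
  {c | F ⊆ {x ∈ P | ∀ y ∈ P, dot c y ≤ dot c x}}

/-- `coneOf X`: nonnegative linear combinations of finitely many elements of `X`. -/
def coneOf {n : ℕ} (X : Set (Vec n)) : Set (Vec n) :=
  {v | ∃ (k : ℕ) (x : Fin k → Vec n) (l : Fin k → ℝ),
      (∀ i, x i ∈ X) ∧ (∀ i, 0 ≤ l i) ∧ v = ∑ i, l i • x i}

/-- The reflection `ρ_z P = 2z - P` of `P` with respect to `z`. -/
def reflP {n : ℕ} (z : Vec n) (P : Set (Vec n)) : Set (Vec n) :=
  (fun x => (2 : ℝ) • z - x) '' P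

/-- An edge is a 1-dimensional face. -/
def IsEdge {n : ℕ} (P E : Set (Vec n)) : Prop := IsFace P E ∧ sdim E = 1

/-- `(P, v)` is oriented if `v` is not perpendicular to any edge of `P`. -/
def Oriented {n : ℕ} (P : Set (Vec n)) (v : Vec n) : Prop :=
  ∀ E, IsEdge P E → ∀ d ∈ (affineSpan ℝ E).direction, d ≠ 0 → dot d v ≠ 0

/-- `(P, v)` is positively oriented if `(P ∩ ρ_z P, v)` is oriented for every `z ∈ P`. -/
def PosOriented {n : ℕ} (P : Set (Vec n)) (v : Vec n) : Prop :=
  ∀ z ∈ P, Oriented (P ∩ reflP z P) v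

/-- `x` is the minimizer of `⟨-, v⟩` on `P`. -/
def IsBotOf {n : ℕ} (P : Set (Vec n)) (v x : Vec n) : Prop :=
  x ∈ P ∧ ∀ y ∈ P, dot v x ≤ dot v y

/-- `x` is the maximizer of `⟨-, v⟩` on `P`. -/
def IsTopOf {n : ℕ} (P : Set (Vec n)) (v x : Vec n) : Prop :=
  x ∈ P ∧ ∀ y ∈ P, dot v y ≤ dot v x

/-- `(P, v)` is quasi-oriented if `⟨-, v⟩` has a unique minimizer and a unique maximizer on `P`. -/
def QuasiOriented {n : ℕ} (P : Set (Vec n)) (v : Vec n) : Prop :=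
  (∃! x, IsBotOf P v x) ∧ (∃! x, IsTopOf P v x)

/-- `(P, v)` is quasi-positively oriented if `(P ∩ ρ_z P, v)` is quasi-oriented for all `z ∈ P`. -/
def QuasiPosOriented {n : ℕ} (P : Set (Vec n)) (v : Vec n) : Prop :=
  ∀ z ∈ P, QuasiOriented (P ∩ reflP z P) v

/-- The polytope `P^φ = π^φ(P × P) ⊆ ℝ^{n+1}`, where `π^φ(x,y) = ((x+y)/2, ⟨x - y, v⟩)`. -/
def Pphi {n : ℕ} (P : Set (Vec n)) (v : Vec n) : Set (Vec (n + 1)) :=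
  {w | ∃ x ∈ P, ∃ y ∈ P, w = Fin.snoc ((1 / 2 : ℝ) • (x + y)) (dot (x - y) v)}

/-- The pair of faces `(F, G)` belongs to `F^φ`: there are no `x ∈ F`, `y ∈ G`, `λ > 0` with
`(π(x,y), φ(x,y) - λ) ∈ P^φ`. -/
def InFphi {n : ℕ} (P : Set (Vec n)) (v : Vec n) (F G : Set (Vec n)) : Prop :=
  ¬ ∃ x ∈ F, ∃ y ∈ G, ∃ lam : ℝ, 0 < lam ∧
      (Fin.snoc ((1 / 2 : ℝ) • (x + y)) (dot (x - y) v - lam) : Vec (n + 1)) ∈ Pphi P v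

/-- The set `(A + B)/2`. -/
def avgSet {n : ℕ} (A B : Set (Vec n)) : Set (Vec n) :=
  {z | ∃ x ∈ A, ∃ y ∈ B, z = (1 / 2 : ℝ) • (x + y)}

/-- The coherent subdivision `π(F^φ)` is tight. -/
def TightSub {n : ℕ} (P : Set (Vec n)) (v : Vec n) : Prop :=
  ∀ F G : Set (Vec n), IsFace P F → IsFace P G → F.Nonempty → G.Nonempty →
    InFphi P v F G → sdim F + sdim G = sdim (avgSet F G)

/-- `d` is a direction of an edge of `P ∩ ρ_z P` for some `z ∈ P`; the hyperplanes of the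
fundamental hyperplane arrangement `H_P` are the orthogonal complements of such directions. -/
def EdgeDir {n : ℕ} (P : Set (Vec n)) (d : Vec n) : Prop :=
  d ≠ 0 ∧ ∃ z ∈ P, ∃ E, IsEdge (P ∩ reflP z P) E ∧ d ∈ (affineSpan ℝ E).direction

/-- The cone `cone(-N_P(F) ∪ N_P(G))`. -/
def diagCone {n : ℕ} (P F G : Set (Vec n)) : Set (Vec n) :=
  coneOf ((Neg.neg '' normalCone P F) ∪ normalCone P G)


/-- The covering relation of the partial order induced by `v` on the vertices of `P`:
`x ≤ y` whenever `[x, y]` is an edge of `P` with `⟨y - x, v⟩ > 0`. -/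
def edgeCover {n : ℕ} (P : Set (Vec n)) (v : Vec n) (x y : Vec n) : Prop :=
  IsEdge P (segment ℝ x y) ∧ 0 < dot (y - x) v

namespace Aux

section
variable {n : ℕ}



lemma dot_comm (x y : Vec n) : dot x y = dot y x := by
  unfold dot; exact Finset.sum_congr rfl (fun i _ => mul_comm _ _)

lemma dot_add_left (x y z : Vec n) : dot (x + y) z = dot x z + dot y z := by
  unfold dot; rw [← Finset.sum_add_distrib]
  exact Finset.sum_congr rfl (fun i _ => by simp [add_mul])

lemma dot_sub_left (x y z : Vec n) : dot (x - y) z = dot x z - dot y z := by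
  unfold dot; rw [← Finset.sum_sub_distrib]
  exact Finset.sum_congr rfl (fun i _ => by simp [sub_mul])

lemma dot_smul_left (c : ℝ) (x y : Vec n) : dot (c • x) y = c * dot x y := by
  unfold dot; rw [Finset.mul_sum]
  exact Finset.sum_congr rfl (fun i _ => by simp [Pi.smul_apply]; ring)

lemma dot_add_right (x y z : Vec n) : dot x (y + z) = dot x y + dot x z := by
  rw [dot_comm, dot_add_left, dot_comm y x, dot_comm z x]

lemma dot_sub_right (x y z : Vec n) : dot x (y - z) = dot x y - dot x z := by
  rw [dot_comm, dot_sub_left, dot_comm y x, dot_comm z x]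

lemma dot_smul_right (c : ℝ) (x y : Vec n) : dot x (c • y) = c * dot x y := by
  rw [dot_comm, dot_smul_left, dot_comm y x]

lemma dot_zero_left (y : Vec n) : dot 0 y = 0 := by
  unfold dot; simp

lemma dot_zero_right (y : Vec n) : dot y 0 = 0 := by
  rw [dot_comm]; exact dot_zero_left y

lemma dot_neg_left (x y : Vec n) : dot (-x) y = -dot x y := by
  have h := dot_smul_left (-1 : ℝ) x y
  rw [neg_one_smul] at h
  rw [h]; ring

lemma dot_self_nonneg (x : Vec n) : 0 ≤ dot x x :=
  Finset.sum_nonneg (fun i _ => mul_self_nonneg _)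

lemma dot_self_pos {x : Vec n} (hx : x ≠ 0) : 0 < dot x x := by
  rcases (dot_self_nonneg x).lt_or_eq with h | h
  · exact h
  · exfalso; apply hx
    have h0 : ∀ i ∈ Finset.univ, x i * x i = 0 := by
      intro i _
      have := (Finset.sum_eq_zero_iff_of_nonneg (fun i _ => mul_self_nonneg (x i))).1 h.symm
      exact this i (Finset.mem_univ i)
    funext i
    have := h0 i (Finset.mem_univ i)
    exact mul_self_eq_zero.1 this

lemma dot_sum_right {ι : Type*} (s : Finset ι) (f : ι → Vec n) (w : Vec n) :
    dot w (∑ i ∈ s, f i) = ∑ i ∈ s, dot w (f i) := by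
  classical
  induction s using Finset.induction_on with
  | empty => simp [dot_zero_right]
  | @insert a s' ha ih => rw [Finset.sum_insert ha, dot_add_right, ih, Finset.sum_insert ha]

lemma isLinearMap_dot (w : Vec n) : IsLinearMap ℝ (fun x => dot w x) :=
  ⟨fun x y => dot_add_right w x y, fun c x => by rw [dot_smul_right]; rfl⟩

end

section
variable {n : ℕ}

open Classical in

noncomputable def amax (V : Finset (Vec n)) (w : Vec n) : Finset (Vec n) :=
  V.filter (fun s => ∀ y ∈ V, dot w y ≤ dot w s)

lemma mem_amax {V : Finset (Vec n)} {w s : Vec n} :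
    s ∈ amax V w ↔ s ∈ V ∧ ∀ y ∈ V, dot w y ≤ dot w s := by
  classical
  unfold amax
  simp

lemma amax_subset {V : Finset (Vec n)} {w : Vec n} : amax V w ⊆ V := by
  classical
  unfold amax; exact Finset.filter_subset _ _

lemma amax_nonempty {V : Finset (Vec n)} (w : Vec n) (hV : V.Nonempty) :
    (amax V w).Nonempty := by
  obtain ⟨m, hm, hmax⟩ := V.exists_max_image (fun s => dot w s) hV
  exact ⟨m, mem_amax.2 ⟨hm, hmax⟩⟩

lemma dot_eq_of_mem_amax {V : Finset (Vec n)} {w s t : Vec n}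
    (hs : s ∈ amax V w) (ht : t ∈ amax V w) : dot w s = dot w t :=
  le_antisymm ((mem_amax.1 ht).2 s (amax_subset hs)) ((mem_amax.1 hs).2 t (amax_subset ht))

lemma mem_hull_iff {V : Finset (Vec n)} {x : Vec n} :
    x ∈ convexHull ℝ (V : Set (Vec n)) ↔
      ∃ l : Vec n → ℝ, (∀ s ∈ V, 0 ≤ l s) ∧ ∑ s ∈ V, l s = 1 ∧ ∑ s ∈ V, l s • s = x := by
  rw [Finset.convexHull_eq]
  constructor
  · rintro ⟨l, h0, h1, hx⟩
    refine ⟨l, h0, h1, ?_⟩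
    rw [Finset.centerMass_eq_of_sum_1 _ _ h1] at hx
    simpa using hx
  · rintro ⟨l, h0, h1, hx⟩
    refine ⟨l, h0, h1, ?_⟩
    rw [Finset.centerMass_eq_of_sum_1 _ _ h1]
    simpa using hx

lemma dot_le_of_mem_hull {V : Finset (Vec n)} {w x : Vec n} {M : ℝ}
    (hM : ∀ s ∈ V, dot w s ≤ M) (hx : x ∈ convexHull ℝ (V : Set (Vec n))) :
    dot w x ≤ M := by
  rcases mem_hull_iff.1 hx with ⟨l, h0, h1, hs⟩
  have hdx : dot w x = ∑ s ∈ V, l s * dot w s := by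
    rw [← hs, dot_sum_right]
    exact Finset.sum_congr rfl (fun s _ => dot_smul_right _ _ _)
  rw [hdx]
  calc ∑ s ∈ V, l s * dot w s ≤ ∑ s ∈ V, l s * M :=
        Finset.sum_le_sum (fun s hsV => mul_le_mul_of_nonneg_left (hM s hsV) (h0 s hsV))
    _ = M := by rw [← Finset.sum_mul, h1, one_mul]

lemma face_eq_hull_amax (V : Finset (Vec n)) (w : Vec n) (hV : V.Nonempty) :
    {x ∈ convexHull ℝ (V : Set (Vec n)) | ∀ y ∈ convexHull ℝ (V : Set (Vec n)), dot w y ≤ dot w x}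
      = convexHull ℝ ((amax V w : Finset (Vec n)) : Set (Vec n)) := by
  classical
  obtain ⟨m, hm⟩ := amax_nonempty w hV
  set M := dot w m with hMdef
  have hmV : m ∈ V := amax_subset hm
  have hmaxV : ∀ s ∈ V, dot w s ≤ M := (mem_amax.1 hm).2
  have hamaxval : ∀ s ∈ amax V w, dot w s = M := fun s hs => dot_eq_of_mem_amax hs hm
  have hboundP : ∀ y ∈ convexHull ℝ (V : Set (Vec n)), dot w y ≤ M :=
    fun y hy => dot_le_of_mem_hull hmaxV hy
  ext x
  constructor
  · rintro ⟨hxP, hxmax⟩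
    have hmP : m ∈ convexHull ℝ (V : Set (Vec n)) := subset_convexHull ℝ _ hmV
    have hxM : dot w x = M := le_antisymm (hboundP x hxP) (hxmax m hmP)
    rcases mem_hull_iff.1 hxP with ⟨l, h0, h1, hs⟩
    have hsum0 : ∑ s ∈ V, l s * (M - dot w s) = 0 := by
      have : ∑ s ∈ V, l s * (M - dot w s)
          = (∑ s ∈ V, l s) * M - ∑ s ∈ V, l s * dot w s := by
        rw [Finset.sum_mul, ← Finset.sum_sub_distrib]
        exact Finset.sum_congr rfl (fun s _ => by ring)
      rw [this, h1, one_mul]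
      have hdx : dot w x = ∑ s ∈ V, l s * dot w s := by
        rw [← hs, dot_sum_right]
        exact Finset.sum_congr rfl (fun s _ => dot_smul_right _ _ _)
      rw [← hdx, hxM]; ring
    have hzero : ∀ s ∈ V, l s * (M - dot w s) = 0 := by
      intro s hsV
      refine (Finset.sum_eq_zero_iff_of_nonneg ?_).1 hsum0 s hsV
      intro i hi
      exact mul_nonneg (h0 i hi) (by linarith [hmaxV i hi])
    have hlz : ∀ s ∈ V, s ∉ amax V w → l s = 0 := by
      intro s hsV hsn
      rcases mul_eq_zero.1 (hzero s hsV) with h | h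
      · exact h
      · exfalso; apply hsn
        refine mem_amax.2 ⟨hsV, fun y hy => ?_⟩
        have : dot w s = M := by linarith
        rw [this]; exact hmaxV y hy
    apply mem_hull_iff.2
    refine ⟨l, fun s hs' => h0 s (amax_subset hs'), ?_, ?_⟩
    · rw [← h1]
      exact Finset.sum_subset amax_subset (fun s hsV hsn => hlz s hsV hsn)
    · rw [← hs]
      exact Finset.sum_subset amax_subset (fun s hsV hsn => by rw [hlz s hsV hsn, zero_smul])
  · intro hx
    have hxP : x ∈ convexHull ℝ (V : Set (Vec n)) :=
      convexHull_mono (by exact_mod_cast Finset.coe_subset.2 amax_subset) hx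
    have hxM : dot w x = M := by
      have hle : dot w x ≤ M := dot_le_of_mem_hull (fun s hs => le_of_eq (hamaxval s hs)) hx
      have hge : M ≤ dot w x := by
        rcases mem_hull_iff.1 hx with ⟨l, h0, h1, hs⟩
        have : dot w x = ∑ s ∈ amax V w, l s * dot w s := by
          rw [← hs, dot_sum_right]
          exact Finset.sum_congr rfl (fun s _ => dot_smul_right _ _ _)
        rw [this]
        have : ∑ s ∈ amax V w, l s * dot w s = ∑ s ∈ amax V w, l s * M :=
          Finset.sum_congr rfl (fun s hs' => by rw [hamaxval s hs'])
        rw [this, ← Finset.sum_mul, h1, one_mul]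
      linarith
    exact ⟨hxP, fun y hy => by rw [hxM]; exact hboundP y hy⟩

lemma isFace_hull_amax {V : Finset (Vec n)} (w : Vec n) (hV : V.Nonempty) :
    IsFace (convexHull ℝ (V : Set (Vec n))) (convexHull ℝ ((amax V w : Finset (Vec n)) : Set (Vec n))) :=
  ⟨w, (face_eq_hull_amax V w hV).symm⟩

end

section
variable {n : ℕ}

lemma amax_amax (V : Finset (Vec n)) (hV : V.Nonempty) (w1 w2 : Vec n) :
    ∃ w3 : Vec n, amax (amax V w1) w2 = amax V w3 := by
  classical
  set B := amax V w1 with hB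
  obtain ⟨m, hm⟩ := amax_nonempty w1 hV
  set M1 := dot w1 m with hM1
  have hBval : ∀ b ∈ B, dot w1 b = M1 := fun b hb => dot_eq_of_mem_amax hb hm
  have hmaxV : ∀ s ∈ V, dot w1 s ≤ M1 := (mem_amax.1 hm).2
  by_cases hall : ∀ s ∈ V, s ∈ B
  · have hBV : B = V := Finset.Subset.antisymm amax_subset (fun s hs => hall s hs)
    exact ⟨w2, by rw [hBV]⟩
  · push_neg at hall
    obtain ⟨s0, hs0V, hs0nB⟩ := hall
    -- the gap
    set T := V.filter (fun s => s ∉ B) with hT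
    have hTne : T.Nonempty := ⟨s0, Finset.mem_filter.2 ⟨hs0V, hs0nB⟩⟩
    obtain ⟨sg, hsgT, hsgmin⟩ := T.exists_min_image (fun s => M1 - dot w1 s) hTne
    set gap := M1 - dot w1 sg with hgap
    have hsgV : sg ∈ V := (Finset.mem_filter.1 hsgT).1
    have hsgnB : sg ∉ B := (Finset.mem_filter.1 hsgT).2
    have hgappos : 0 < gap := by
      rcases lt_or_ge (dot w1 sg) M1 with h | h
      · simp only [hgap]; linarith
      · exfalso; apply hsgnB
        rw [hB]
        exact mem_amax.2 ⟨hsgV, fun y hy => le_trans (hmaxV y hy) h⟩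
    have hgapB : ∀ y ∈ V, y ∉ B → dot w1 y ≤ M1 - gap := by
      intro y hyV hynB
      have := hsgmin y (Finset.mem_filter.2 ⟨hyV, hynB⟩)
      simp only [hgap] at this ⊢; linarith
    -- bound on w2
    obtain ⟨k, hk, hkmax⟩ := V.exists_max_image (fun s => |dot w2 s|) hV
    set K := |dot w2 k| with hK
    have hKnn : 0 ≤ K := abs_nonneg _
    have hKb : ∀ y ∈ V, |dot w2 y| ≤ K := hkmax
    set ε := gap / (2 * K + 1) with hε
    have hεpos : 0 < ε := div_pos hgappos (by linarith)
    have hkey : ε * (2 * K) < gap := by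
      have : ε * (2 * K + 1) = gap := by
        rw [hε]; field_simp
      nlinarith
    refine ⟨w1 + ε • w2, ?_⟩
    have hw3 : ∀ y : Vec n, dot (w1 + ε • w2) y = dot w1 y + ε * dot w2 y := by
      intro y; rw [dot_add_left, dot_smul_left]
    ext s
    constructor
    · intro hs
      have hsB : s ∈ B := amax_subset hs
      have hsV : s ∈ V := amax_subset hsB
      have hsmax2 : ∀ y ∈ B, dot w2 y ≤ dot w2 s := (mem_amax.1 hs).2
      refine mem_amax.2 ⟨hsV, fun y hyV => ?_⟩
      rw [hw3, hw3, hBval s hsB]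
      by_cases hyB : y ∈ B
      · rw [hBval y hyB]
        have := hsmax2 y hyB
        nlinarith
      · have h1 := hgapB y hyV hyB
        have h2 : dot w2 y - dot w2 s ≤ 2 * K := by
          have hy := hKb y hyV; have hs' := hKb s hsV
          have := abs_le.1 hy; have := abs_le.1 hs'
          cases' abs_le.1 hy with hy1 hy2
          cases' abs_le.1 hs' with hs1 hs2
          linarith
        nlinarith
    · intro hs
      have hsV : s ∈ V := amax_subset hs
      have hsmax : ∀ y ∈ V, dot (w1 + ε • w2) y ≤ dot (w1 + ε • w2) s := (mem_amax.1 hs).2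
      have hsB : s ∈ B := by
        by_contra hsnB
        have h1 := hsmax m (amax_subset hm)
        rw [hw3, hw3] at h1
        have h2 : dot w1 m = M1 := rfl
        have h3 := hgapB s hsV hsnB
        have h4 : dot w2 s - dot w2 m ≤ 2 * K := by
          have hy := hKb s hsV; have hs' := hKb m (amax_subset hm)
          cases' abs_le.1 hy with hy1 hy2
          cases' abs_le.1 hs' with hs1 hs2
          linarith
        nlinarith
      refine mem_amax.2 ⟨hsB, fun y hyB => ?_⟩
      have := hsmax y (amax_subset hyB)
      rw [hw3, hw3, hBval y hyB, hBval s hsB] at this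
      nlinarith [hεpos]

lemma affineSpan_segment (a b : Vec n) :
    affineSpan ℝ (segment ℝ a b) = affineSpan ℝ ({a, b} : Set (Vec n)) := by
  apply le_antisymm
  · apply affineSpan_le.2
    intro x hx
    rw [segment_eq_image_lineMap] at hx
    rcases hx with ⟨t, _, rfl⟩
    exact AffineMap.lineMap_mem_affineSpan_pair t a b
  · apply affineSpan_mono
    intro x hx
    rcases hx with rfl | hx
    · exact left_mem_segment ℝ x b
    · rw [Set.mem_singleton_iff] at hx; subst hx; exact right_mem_segment ℝ a x

lemma sdim_segment {a b : Vec n} (h : a ≠ b) : sdim (segment ℝ a b) = 1 := by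
  unfold sdim
  rw [affineSpan_segment, direction_affineSpan, vectorSpan_pair]
  have hne : a -ᵥ b ≠ 0 := by
    rw [vsub_eq_sub]; exact sub_ne_zero.2 h
  exact finrank_span_singleton hne

lemma strict_of_amax_singleton {V : Finset (Vec n)} {w a : Vec n} (h : amax V w = {a}) :
    a ∈ V ∧ ∀ s ∈ V, s ≠ a → dot w s < dot w a := by
  have haa : a ∈ amax V w := by rw [h]; exact Finset.mem_singleton_self a
  refine ⟨amax_subset haa, fun s hs hne => ?_⟩
  have hsn : s ∉ amax V w := by rw [h]; simpa using hne
  rcases lt_or_ge (dot w s) (dot w a) with h' | h'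
  · exact h'
  · exact absurd (mem_amax.2 ⟨hs, fun y hy => le_trans ((mem_amax.1 haa).2 y hy) h'⟩) hsn

lemma vertex_strict {V : Finset (Vec n)} (hV : V.Nonempty) {a : Vec n}
    (h : IsFace (convexHull ℝ (V : Set (Vec n))) {a}) :
    ∃ wa, amax V wa = {a} := by
  rcases h with ⟨c, hc⟩
  have h1 : ({a} : Set (Vec n)) = convexHull ℝ ((amax V c : Finset _) : Set (Vec n)) := by
    rw [hc, face_eq_hull_amax V c hV]
  have h2 : ((amax V c : Finset _) : Set (Vec n)) ⊆ {a} := by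
    rw [h1]; exact subset_convexHull ℝ _
  obtain ⟨m, hm⟩ := amax_nonempty c hV
  refine ⟨c, Finset.eq_singleton_iff_unique_mem.2 ⟨?_, fun x hx => h2 hx⟩⟩
  have hma : m = a := h2 hm
  rwa [hma] at hm

lemma vertex_of_segment {V C : Finset (Vec n)} {x x' : Vec n}
    (hV : V.Nonempty) (hC : ∃ w, C = amax V w)
    (hseg : convexHull ℝ (C : Set (Vec n)) = segment ℝ x x') (hne : x ≠ x') :
    ∃ w', amax V w' = {x'} := by
  classical
  set d := x' - x with hd
  have hdd : 0 < dot d d := dot_self_pos (by rw [hd]; exact sub_ne_zero.2 (Ne.symm hne))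
  have hfxx' : dot d x' - dot d x = dot d d := by rw [hd, dot_sub_right]
  -- every point of the segment has d-value ≤ that of x', equality iff it is x'
  have hsegval : ∀ s ∈ segment ℝ x x', dot d s ≤ dot d x' ∧ (dot d s = dot d x' → s = x') := by
    intro s hs
    rcases hs with ⟨u, v', hu, hv, huv, hsum⟩
    have hval : dot d s = u * dot d x + v' * dot d x' := by
      rw [← hsum, dot_add_right, dot_smul_right, dot_smul_right]
    constructor
    · rw [hval]
      have h5 : 0 ≤ u * (dot d x' - dot d x) := mul_nonneg hu (by linarith)
      rw [mul_sub] at h5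
      have h7 : u * dot d x' + v' * dot d x' = dot d x' := by
        linear_combination dot d x' * huv
      linarith
    · intro hvaleq
      rw [hval] at hvaleq
      have h6 : u * (dot d x' - dot d x) = 0 := by
        linear_combination dot d x' * huv - hvaleq
      have hu0 : u = 0 := by
        rcases mul_eq_zero.1 h6 with h | h
        · exact h
        · exfalso; linarith
      have hv1 : v' = 1 := by linarith
      rw [← hsum, hu0, hv1, zero_smul, one_smul, zero_add]
  -- elements of C are in the segment
  have hCseg : ∀ s ∈ C, s ∈ segment ℝ x x' := by
    intro s hs
    rw [← hseg]
    exact subset_convexHull ℝ _ hs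
  -- x' ∈ C
  have hx'C : x' ∈ C := by
    have hx'h : x' ∈ convexHull ℝ (C : Set (Vec n)) := by
      rw [hseg]; exact right_mem_segment ℝ x x'
    rcases mem_hull_iff.1 hx'h with ⟨l, h0, h1, hsum⟩
    have hterm : ∑ s ∈ C, l s * (dot d x' - dot d s) = 0 := by
      have hxd : dot d x' = ∑ s ∈ C, l s * dot d s := by
        rw [← hsum, dot_sum_right]
        exact Finset.sum_congr rfl (fun s _ => dot_smul_right _ _ _)
      have : ∑ s ∈ C, l s * (dot d x' - dot d s)
          = (∑ s ∈ C, l s) * dot d x' - ∑ s ∈ C, l s * dot d s := by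
        rw [Finset.sum_mul, ← Finset.sum_sub_distrib]
        exact Finset.sum_congr rfl (fun s _ => by ring)
      rw [this, h1, one_mul, ← hxd]; ring
    have hzero : ∀ s ∈ C, l s * (dot d x' - dot d s) = 0 := by
      intro s hsC
      refine (Finset.sum_eq_zero_iff_of_nonneg ?_).1 hterm s hsC
      intro i hi
      exact mul_nonneg (h0 i hi) (by linarith [(hsegval i (hCseg i hi)).1])
    -- some coefficient is positive
    have : ∃ s ∈ C, l s ≠ 0 := by
      by_contra hno
      push_neg at hno
      rw [Finset.sum_eq_zero (fun s hs => hno s hs)] at h1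
      norm_num at h1
    obtain ⟨s, hsC, hls⟩ := this
    rcases mul_eq_zero.1 (hzero s hsC) with h | h
    · exact absurd h hls
    · have : dot d s = dot d x' := by linarith
      have := (hsegval s (hCseg s hsC)).2 this
      rwa [← this]
  -- amax C d = {x'}
  have hamaxC : amax C d = {x'} := by
    have hx'max : x' ∈ amax C d :=
      mem_amax.2 ⟨hx'C, fun y hy => (hsegval y (hCseg y hy)).1⟩
    apply Finset.eq_singleton_iff_unique_mem.2
    refine ⟨hx'max, fun s hs => ?_⟩
    have : dot d s = dot d x' := dot_eq_of_mem_amax hs hx'max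
    exact (hsegval s (hCseg s (amax_subset hs))).2 this
  rcases hC with ⟨w, rfl⟩
  obtain ⟨w3, hw3⟩ := amax_amax V hV w d
  exact ⟨w3, by rw [← hw3, hamaxC]⟩

end

section
variable {m : ℕ}

lemma farkas {ι : Type} (s : Finset ι) :
    ∀ (y : ι → Vec m) (z : Vec m),
    (∃ l : ι → ℝ, (∀ i ∈ s, 0 ≤ l i) ∧ z = ∑ i ∈ s, l i • y i) ∨
    (∃ w : Vec m, (∀ i ∈ s, dot (y i) w ≤ 0) ∧ 0 < dot z w) := by
  classical
  induction s using Finset.induction_on with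
  | empty =>
    intro y z
    by_cases hz : z = 0
    · left; exact ⟨fun _ => 0, by simp, by simp [hz]⟩
    · right; exact ⟨z, by simp, dot_self_pos hz⟩
  | @insert a0 s ha0 ih =>
    intro y z
    rcases ih y z with ⟨l, hl, hz⟩ | ⟨w1, hw1, hzw1⟩
    · left
      refine ⟨Function.update l a0 0, ?_, ?_⟩
      · intro i hi
        rcases Finset.mem_insert.1 hi with rfl | hi'
        · simp
        · rw [Function.update_of_ne (by rintro rfl; exact ha0 hi')]
          exact hl i hi'
      · rw [Finset.sum_insert ha0]
        simp only [Function.update_self, zero_smul, zero_add]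
        rw [hz]
        apply Finset.sum_congr rfl
        intro i hi
        rw [Function.update_of_ne (by rintro rfl; exact ha0 hi)]
    · by_cases h0 : dot (y a0) w1 ≤ 0
      · right
        refine ⟨w1, fun i hi => ?_, hzw1⟩
        rcases Finset.mem_insert.1 hi with rfl | hi'
        · exact h0
        · exact hw1 i hi'
      · push_neg at h0
        set d0 := dot (y a0) w1 with hd0
        have hd0ne : d0 ≠ 0 := ne_of_gt h0
        set T : Vec m → Vec m := fun x => x - (dot x w1 / d0) • y a0 with hT
        rcases ih (fun i => T (y i)) (T z) with ⟨l, hl, hTz⟩ | ⟨w2, hw2, hTzw2⟩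
        · left
          set μ := (dot z w1 - ∑ i ∈ s, l i * dot (y i) w1) / d0 with hμ
          have hμ0 : 0 ≤ μ := by
            apply div_nonneg _ (le_of_lt h0)
            have hterm : ∀ i ∈ s, l i * dot (y i) w1 ≤ 0 :=
              fun i hi => mul_nonpos_of_nonneg_of_nonpos (hl i hi) (hw1 i hi)
            have hsumle : ∑ i ∈ s, l i * dot (y i) w1 ≤ 0 := Finset.sum_nonpos hterm
            linarith
          refine ⟨Function.update l a0 μ, ?_, ?_⟩
          · intro i hi
            rcases Finset.mem_insert.1 hi with rfl | hi'
            · rw [Function.update_self]; exact hμ0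
            · rw [Function.update_of_ne (by rintro rfl; exact ha0 hi')]; exact hl i hi'
          · rw [Finset.sum_insert ha0, Function.update_self]
            have hsum : ∑ i ∈ s, Function.update l a0 μ i • y i = ∑ i ∈ s, l i • y i := by
              apply Finset.sum_congr rfl
              intro i hi
              rw [Function.update_of_ne (by rintro rfl; exact ha0 hi)]
            rw [hsum]
            have hsum2 : ∑ i ∈ s, l i • T (y i)
                = ∑ i ∈ s, l i • y i - (∑ i ∈ s, l i * (dot (y i) w1 / d0)) • y a0 := by
              rw [Finset.sum_smul, ← Finset.sum_sub_distrib]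
              apply Finset.sum_congr rfl
              intro i _
              rw [hT]
              simp only []
              rw [smul_sub, smul_smul]
            have hmain : z - (dot z w1 / d0) • y a0
                = ∑ i ∈ s, l i • y i - (∑ i ∈ s, l i * (dot (y i) w1 / d0)) • y a0 := by
              have hTzdef : T z = z - (dot z w1 / d0) • y a0 := rfl
              rw [← hTzdef, hTz, hsum2]
            have e1 : z = (∑ i ∈ s, l i • y i
                - (∑ i ∈ s, l i * (dot (y i) w1 / d0)) • y a0) + (dot z w1 / d0) • y a0 :=
              eq_add_of_sub_eq hmain
            have e2 : μ • y a0 = (dot z w1 / d0) • y a0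
                - (∑ i ∈ s, l i * (dot (y i) w1 / d0)) • y a0 := by
              rw [← sub_smul]
              congr 1
              rw [hμ, sub_div, Finset.sum_div]
              congr 1
              exact Finset.sum_congr rfl (fun i _ => by ring)
            have : μ • y a0 + ∑ i ∈ s, l i • y i = z := by
              rw [e2]
              conv_rhs => rw [e1]
              abel
            exact this.symm
        · right
          set w := w2 - (dot (y a0) w2 / d0) • w1 with hw
          have hkey : ∀ x : Vec m, dot x w = dot (T x) w2 := by
            intro x
            rw [hw, dot_sub_right, dot_smul_right, hT]
            simp only []
            rw [dot_sub_left, dot_smul_left]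
            ring
          refine ⟨w, ?_, ?_⟩
          · intro i hi
            rcases Finset.mem_insert.1 hi with rfl | hi'
            · rw [hw, dot_sub_right, dot_smul_right, ← hd0]
              field_simp
              simp
            · rw [hkey]; exact hw2 i hi'
          · rw [hkey]; exact hTzw2

end

section
variable {n : ℕ}

lemma dot_snoc (x y : Vec n) (α β : ℝ) :
    dot (Fin.snoc x α : Vec (n + 1)) (Fin.snoc y β : Vec (n + 1)) = dot x y + α * β := by
  unfold dot
  rw [Fin.sum_univ_castSucc]
  simp

lemma comb_mem_hull {V : Finset (Vec n)} {g : Vec n → ℝ} {G : ℝ} {e : Vec n}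
    (heV : e ∈ V) (hg : ∀ x ∈ V, 0 ≤ g x) (hG : ∑ x ∈ V, g x = G) (hG1 : G ≤ 1) :
    (∑ x ∈ V, g x • x) + (1 - G) • e ∈ convexHull ℝ (V : Set (Vec n)) := by
  classical
  apply mem_hull_iff.2
  refine ⟨fun x => g x + (if x = e then 1 - G else 0), ?_, ?_, ?_⟩
  · intro x hx
    have h1 := hg x hx
    by_cases hxe : x = e
    · subst hxe; simp; linarith
    · simp [hxe]; linarith
  · rw [Finset.sum_add_distrib, hG, Finset.sum_ite_eq' V e (fun _ => 1 - G)]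
    simp [heV]
  · have : ∀ x ∈ V, (g x + (if x = e then 1 - G else 0)) • x
        = g x • x + (if x = e then (1 - G) • x else 0) := by
      intro x _
      rw [add_smul]
      congr 1
      by_cases hxe : x = e <;> simp [hxe]
    rw [Finset.sum_congr rfl this, Finset.sum_add_distrib,
      Finset.sum_ite_eq' V e (fun x => (1 - G) • x)]
    simp [heV]

/-- From the fiber-minimality property, obtain a common supporting functional pair. -/

lemma exists_functional {V : Finset (Vec n)} {v a b : Vec n}
    (haV : a ∈ V) (hbV : b ∈ V)
    (hstar : ∀ q p : Vec n, q ∈ convexHull ℝ (V : Set (Vec n)) →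
      p ∈ convexHull ℝ (V : Set (Vec n)) → q + p = a + b → dot v p ≤ dot v b) :
    ∃ (c : Vec n) (κ : ℝ), 0 < κ ∧ (∀ s ∈ V, dot c s ≤ dot c a) ∧
      (∀ s ∈ V, dot c s + κ * dot v s ≤ dot c b + κ * dot v b) := by
  classical
  set y : Bool × Vec n → Vec (n + 1) := fun i =>
    cond i.1 (Fin.snoc (i.2 - b) (2 * dot v (i.2 - b))) (Fin.snoc (i.2 - a) 0) with hy
  set z : Vec (n + 1) := Fin.snoc (0 : Vec n) 1 with hz
  rcases farkas ((Finset.univ : Finset Bool) ×ˢ V) y z with ⟨l, hl, hzeq⟩ | ⟨w, hwle, hzw⟩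
  · -- contradiction with hstar
    exfalso
    set lam : Vec n → ℝ := fun x => l (false, x) with hlam
    set μ : Vec n → ℝ := fun x => l (true, x) with hμ
    have hlam0 : ∀ x ∈ V, 0 ≤ lam x := fun x hx =>
      hl (false, x) (Finset.mem_product.2 ⟨Finset.mem_univ _, hx⟩)
    have hμ0 : ∀ x ∈ V, 0 ≤ μ x := fun x hx =>
      hl (true, x) (Finset.mem_product.2 ⟨Finset.mem_univ _, hx⟩)
    rw [Finset.sum_product, Fintype.sum_bool] at hzeq
    have hytrue : ∀ x : Vec n, y (true, x) = Fin.snoc (x - b) (2 * dot v (x - b)) := by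
      intro x; simp [hy]
    have hyfalse : ∀ x : Vec n, y (false, x) = Fin.snoc (x - a) 0 := by
      intro x; simp [hy]
    -- last coordinate
    have hlast : (1 : ℝ) = ∑ x ∈ V, μ x * (2 * dot v (x - b)) := by
      have h := congrFun hzeq (Fin.last n)
      rw [hz] at h
      simp only [Fin.snoc_last, Pi.add_apply, Finset.sum_apply, Pi.smul_apply,
        smul_eq_mul] at h
      rw [h]
      have e1 : ∀ x ∈ V, l (true, x) * y (true, x) (Fin.last n)
          = μ x * (2 * dot v (x - b)) := by
        intro x _; rw [hytrue]; simp [Fin.snoc_last, hμ]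
      have e2 : ∀ x ∈ V, l (false, x) * y (false, x) (Fin.last n) = 0 := by
        intro x _; rw [hyfalse]; simp [Fin.snoc_last]
      rw [Finset.sum_congr rfl e1, Finset.sum_congr rfl e2]
      simp
    -- first n coordinates
    have hvec : (∑ x ∈ V, μ x • (x - b)) + (∑ x ∈ V, lam x • (x - a)) = 0 := by
      funext j
      have h := congrFun hzeq (Fin.castSucc j)
      rw [hz] at h
      simp only [Fin.snoc_castSucc, Pi.add_apply, Finset.sum_apply, Pi.smul_apply,
        smul_eq_mul, Pi.zero_apply] at h ⊢
      have e1 : ∀ x ∈ V, l (true, x) * y (true, x) (Fin.castSucc j)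
          = μ x * (x - b) j := by
        intro x _; rw [hytrue]; simp [Fin.snoc_castSucc, hμ]
      have e2 : ∀ x ∈ V, l (false, x) * y (false, x) (Fin.castSucc j)
          = lam x * (x - a) j := by
        intro x _; rw [hyfalse]; simp [Fin.snoc_castSucc, hlam]
      rw [Finset.sum_congr rfl e1, Finset.sum_congr rfl e2] at h
      linarith [h]
    set Sl := ∑ x ∈ V, lam x • x with hSl
    set Sm := ∑ x ∈ V, μ x • x with hSm
    set L := ∑ x ∈ V, lam x with hL
    set M := ∑ x ∈ V, μ x with hM
    have hexp1 : ∑ x ∈ V, μ x • (x - b) = Sm - M • b := by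
      rw [hSm, hM, Finset.sum_smul, ← Finset.sum_sub_distrib]
      exact Finset.sum_congr rfl (fun x _ => smul_sub _ _ _)
    have hexp2 : ∑ x ∈ V, lam x • (x - a) = Sl - L • a := by
      rw [hSl, hL, Finset.sum_smul, ← Finset.sum_sub_distrib]
      exact Finset.sum_congr rfl (fun x _ => smul_sub _ _ _)
    have hScomb : Sl + Sm = L • a + M • b := by
      have h := hvec
      rw [hexp1, hexp2] at h
      calc Sl + Sm = ((Sm - M • b) + (Sl - L • a)) + (L • a + M • b) := by abel
        _ = 0 + (L • a + M • b) := by rw [h]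
        _ = L • a + M • b := zero_add _
    have hlast2 : 2 * (dot v Sm - M * dot v b) = 1 := by
      have e0 : ∑ x ∈ V, μ x * dot v (x - b) = dot v Sm - M * dot v b := by
        have e00 : ∑ x ∈ V, μ x * dot v (x - b) = dot v (∑ x ∈ V, μ x • (x - b)) := by
          rw [dot_sum_right]
          exact (Finset.sum_congr rfl (fun x _ => dot_smul_right _ _ _)).symm
        rw [e00, hexp1, dot_sub_right, dot_smul_right]
      have e1 : ∑ x ∈ V, μ x * (2 * dot v (x - b)) = 2 * ∑ x ∈ V, μ x * dot v (x - b) := by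
        rw [Finset.mul_sum]
        exact Finset.sum_congr rfl (fun x _ => by ring)
      rw [← e0, ← e1, ← hlast]
    have hM0 : 0 ≤ M := Finset.sum_nonneg hμ0
    have hMpos : 0 < M := by
      rcases hM0.lt_or_eq with h | h
      · exact h
      · exfalso
        have hz0 : ∑ x ∈ V, μ x = 0 := by rw [← hM]; exact h.symm
        have hall : ∀ x ∈ V, μ x = 0 := (Finset.sum_eq_zero_iff_of_nonneg hμ0).1 hz0
        have hone : (1 : ℝ) = 0 := by
          rw [hlast]
          exact Finset.sum_eq_zero (fun x hx => by rw [hall x hx]; ring)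
        norm_num at hone
    have hMne : M ≠ 0 := ne_of_gt hMpos
    set p := M⁻¹ • Sm with hp
    have hpP : p ∈ convexHull ℝ (V : Set (Vec n)) := by
      have hgsum : ∑ x ∈ V, μ x / M = 1 := by
        rw [← Finset.sum_div, ← hM, div_self hMne]
      have h1 := comb_mem_hull haV (fun x hx => div_nonneg (hμ0 x hx) hM0) hgsum le_rfl
      rw [sub_self, zero_smul, add_zero] at h1
      have heq : ∑ x ∈ V, (μ x / M) • x = p := by
        rw [hp, hSm, Finset.smul_sum]
        exact Finset.sum_congr rfl (fun x _ => by
          rw [smul_smul]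
          congr 1
          field_simp)
      rwa [heq] at h1
    have hdotp : dot v Sm = M * dot v p := by
      rw [hp, dot_smul_right]
      field_simp
    have hpb : dot v b < dot v p := by
      by_contra hcon
      push_neg at hcon
      nlinarith [mul_nonneg hM0 (sub_nonneg.2 hcon)]
    have hL0 : 0 ≤ L := Finset.sum_nonneg hlam0
    rcases le_or_gt L M with hLM | hML
    · -- case L ≤ M
      set q := M⁻¹ • Sl + (1 - L / M) • a with hq
      have hqP : q ∈ convexHull ℝ (V : Set (Vec n)) := by
        have hgsum : ∑ x ∈ V, lam x / M = L / M := by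
          rw [← Finset.sum_div, ← hL]
        have h1 := comb_mem_hull haV (fun x hx => div_nonneg (hlam0 x hx) hM0) hgsum
          ((div_le_one hMpos).2 hLM)
        have heq : ∑ x ∈ V, (lam x / M) • x = M⁻¹ • Sl := by
          rw [hSl, Finset.smul_sum]
          exact Finset.sum_congr rfl (fun x _ => by
            rw [smul_smul]
            congr 1
            field_simp)
        rwa [heq] at h1
      have hsum : q + p = a + b := by
        have hco : M * (1 - L / M) = M - L := by field_simp
        have e1 : M • q = Sl + (M - L) • a := by
          rw [hq, smul_add, smul_smul, smul_smul, mul_inv_cancel₀ hMne, one_smul, hco]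
        have e2 : M • p = Sm := by
          rw [hp, smul_smul, mul_inv_cancel₀ hMne, one_smul]
        have hMq : M • (q + p) = M • (a + b) := by
          rw [smul_add, e1, e2, smul_add]
          have h9 : (M : ℝ) = L + (M - L) := by ring
          calc Sl + (M - L) • a + Sm = (Sl + Sm) + (M - L) • a := by abel
            _ = (L • a + M • b) + (M - L) • a := by rw [hScomb]
            _ = (L + (M - L)) • a + M • b := by rw [add_smul]; abel
            _ = M • a + M • b := by rw [← h9]
        exact smul_right_injective (Vec n) hMne hMq
      have hcontra := hstar q p hqP hpP hsum
      linarith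
    · -- case M < L
      have hLpos : 0 < L := lt_of_le_of_lt hM0 hML
      have hLne : L ≠ 0 := ne_of_gt hLpos
      set q := L⁻¹ • Sl with hq
      set p2 := L⁻¹ • Sm + (1 - M / L) • b with hp2
      have hqP : q ∈ convexHull ℝ (V : Set (Vec n)) := by
        have hgsum : ∑ x ∈ V, lam x / L = 1 := by
          rw [← Finset.sum_div, ← hL, div_self hLne]
        have h1 := comb_mem_hull haV (fun x hx => div_nonneg (hlam0 x hx) hL0) hgsum le_rfl
        rw [sub_self, zero_smul, add_zero] at h1
        have heq : ∑ x ∈ V, (lam x / L) • x = q := by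
          rw [hq, hSl, Finset.smul_sum]
          exact Finset.sum_congr rfl (fun x _ => by
            rw [smul_smul]
            congr 1
            field_simp)
        rwa [heq] at h1
      have hp2P : p2 ∈ convexHull ℝ (V : Set (Vec n)) := by
        have hgsum : ∑ x ∈ V, μ x / L = M / L := by
          rw [← Finset.sum_div, ← hM]
        have h1 := comb_mem_hull hbV (fun x hx => div_nonneg (hμ0 x hx) hL0) hgsum
          ((div_le_one hLpos).2 (le_of_lt hML))
        have heq : ∑ x ∈ V, (μ x / L) • x = L⁻¹ • Sm := by
          rw [hSm, Finset.smul_sum]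
          exact Finset.sum_congr rfl (fun x _ => by
            rw [smul_smul]
            congr 1
            field_simp)
        rwa [heq] at h1
      have hsum : q + p2 = a + b := by
        have hco : L * (1 - M / L) = L - M := by field_simp
        have e1 : L • q = Sl := by
          rw [hq, smul_smul, mul_inv_cancel₀ hLne, one_smul]
        have e2 : L • p2 = Sm + (L - M) • b := by
          rw [hp2, smul_add, smul_smul, smul_smul, mul_inv_cancel₀ hLne, one_smul, hco]
        have hLq : L • (q + p2) = L • (a + b) := by
          rw [smul_add, e1, e2, smul_add]
          have h9 : (L : ℝ) = M + (L - M) := by ring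
          calc Sl + (Sm + (L - M) • b) = (Sl + Sm) + (L - M) • b := by abel
            _ = (L • a + M • b) + (L - M) • b := by rw [hScomb]
            _ = L • a + (M + (L - M)) • b := by rw [add_smul]; abel
            _ = L • a + L • b := by rw [← h9]
        exact smul_right_injective (Vec n) hLne hLq
      have hval := hstar q p2 hqP hp2P hsum
      have hvp2 : dot v p2 = L⁻¹ * (M * dot v p) + (1 - M / L) * dot v b := by
        rw [hp2, dot_add_right, dot_smul_right, dot_smul_right, ← hdotp]
      rw [hvp2] at hval
      have h4 := mul_le_mul_of_nonneg_left hval hLpos.le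
      have h5 : L * (L⁻¹ * (M * dot v p) + (1 - M / L) * dot v b)
          = M * dot v p + (L - M) * dot v b := by
        field_simp
      rw [h5] at h4
      nlinarith [mul_pos hMpos (sub_pos.2 hpb)]
  · -- extract the functional
    set c : Vec n := Fin.init w with hc
    set τ : ℝ := w (Fin.last n) with hτ
    have hwsnoc : (Fin.snoc c τ : Vec (n + 1)) = w := Fin.snoc_init_self w
    have hτpos : 0 < τ := by
      have h := hzw
      rw [hz, ← hwsnoc, dot_snoc] at h
      simpa [dot_zero_left] using h
    refine ⟨c, 2 * τ, by linarith, ?_, ?_⟩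
    · intro s hs
      have h := hwle (false, s) (Finset.mem_product.2 ⟨Finset.mem_univ _, hs⟩)
      rw [show y (false, s) = Fin.snoc (s - a) 0 by simp [hy], ← hwsnoc, dot_snoc] at h
      rw [dot_sub_left] at h
      rw [dot_comm c s, dot_comm c a]
      linarith
    · intro s hs
      have h := hwle (true, s) (Finset.mem_product.2 ⟨Finset.mem_univ _, hs⟩)
      rw [show y (true, s) = Fin.snoc (s - b) (2 * dot v (s - b)) by simp [hy],
        ← hwsnoc, dot_snoc] at h
      rw [dot_sub_left, dot_sub_right] at h
      rw [dot_comm c s, dot_comm c b]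
      nlinarith

end

section
variable {n : ℕ}

lemma mem_amax_iff_eq {B : Finset (Vec n)} {c a s : Vec n} (ha : a ∈ amax B c) (hs : s ∈ B) :
    s ∈ amax B c ↔ dot c s = dot c a := by
  constructor
  · intro h; exact dot_eq_of_mem_amax h ha
  · intro h
    exact mem_amax.2 ⟨hs, fun y hy => le_trans ((mem_amax.1 ha).2 y hy) (le_of_eq h.symm)⟩

/-- The parametric sweep from a vertex certificate in direction `g`. -/

lemma sweep {V B : Finset (Vec n)} (hFB : ∃ w, B = amax V w)
    {a : Vec n} (ha : a ∈ B) {wa : Vec n}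
    (hwa : ∀ s ∈ V, s ≠ a → dot wa s < dot wa a)
    {g : Vec n} (hex : ∃ s ∈ B, 0 < dot g s - dot g a) :
    ∃ t : ℝ, 0 < t ∧
      a ∈ amax B (wa + t • g) ∧
      (∃ s ∈ amax B (wa + t • g), 0 < dot g s - dot g a) ∧
      (∀ s ∈ amax B (wa + t • g), s ≠ a → 0 < dot g s - dot g a) := by
  classical
  have hBV : B ⊆ V := by rcases hFB with ⟨w, rfl⟩; exact amax_subset
  obtain ⟨sx, hsxB, hsxg⟩ := hex
  set Sp := B.filter (fun s => 0 < dot g s - dot g a) with hSp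
  have hSpne : Sp.Nonempty := ⟨sx, Finset.mem_filter.2 ⟨hsxB, hsxg⟩⟩
  obtain ⟨s0, hs0Sp, hs0min⟩ :=
    Sp.exists_min_image (fun s => (dot wa a - dot wa s) / (dot g s - dot g a)) hSpne
  have hs0B : s0 ∈ B := (Finset.mem_filter.1 hs0Sp).1
  have hs0g : 0 < dot g s0 - dot g a := (Finset.mem_filter.1 hs0Sp).2
  have hs0ne : s0 ≠ a := by
    intro h; rw [h] at hs0g; linarith
  set t := (dot wa a - dot wa s0) / (dot g s0 - dot g a) with ht
  have htpos : 0 < t :=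
    div_pos (by linarith [hwa s0 (hBV hs0B) hs0ne]) hs0g
  have hcval : ∀ y : Vec n, dot (wa + t • g) y = dot wa y + t * dot g y := by
    intro y; rw [dot_add_left, dot_smul_left]
  have haA : a ∈ amax B (wa + t • g) := by
    refine mem_amax.2 ⟨ha, fun y hy => ?_⟩
    rw [hcval, hcval]
    by_cases hyg : 0 < dot g y - dot g a
    · have hySp : y ∈ Sp := Finset.mem_filter.2 ⟨hy, hyg⟩
      have := hs0min y hySp
      have hle : t * (dot g y - dot g a) ≤ dot wa a - dot wa y := by
        rw [ht]
        calc (dot wa a - dot wa s0) / (dot g s0 - dot g a) * (dot g y - dot g a)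
            ≤ (dot wa a - dot wa y) / (dot g y - dot g a) * (dot g y - dot g a) := by
              apply mul_le_mul_of_nonneg_right _ (le_of_lt hyg)
              exact this
          _ = dot wa a - dot wa y := by field_simp
      nlinarith
    · push_neg at hyg
      by_cases hya : y = a
      · rw [hya]
      · have h1 : dot wa y < dot wa a := hwa y (hBV hy) hya
        nlinarith
  have hs0eq : dot (wa + t • g) s0 = dot (wa + t • g) a := by
    rw [hcval, hcval, ht]
    field_simp
    ring
  have hs0A : s0 ∈ amax B (wa + t • g) := (mem_amax_iff_eq haA hs0B).2 hs0eq
  refine ⟨t, htpos, haA, ⟨s0, hs0A, hs0g⟩, fun s hsA hsa => ?_⟩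
  have hseq : dot (wa + t • g) s = dot (wa + t • g) a :=
    (mem_amax_iff_eq haA (amax_subset hsA)).1 hsA
  rw [hcval, hcval] at hseq
  have h1 : dot wa s < dot wa a := hwa s (hBV (amax_subset hsA)) hsa
  by_contra hcon
  push_neg at hcon
  nlinarith

/-- Edge existence at a vertex (Lemma X). -/

lemma lemX : ∀ (k : ℕ) (B V : Finset (Vec n)), B.card ≤ k → V.Nonempty →
    (∃ w, B = amax V w) → ∀ (a : Vec n), a ∈ B → ∀ (wa : Vec n),
    (∀ s ∈ V, s ≠ a → dot wa s < dot wa a) →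
    (∃ s ∈ B, s ≠ a) →
    ∃ a' ∈ B, a' ≠ a ∧ ∃ C : Finset (Vec n), (∃ w, C = amax V w) ∧ C ⊆ B ∧
      convexHull ℝ (C : Set (Vec n)) = segment ℝ a a' := by
  intro k
  induction k with
  | zero =>
    intro B V hk _ _ a ha _ _ _
    exfalso
    have : B = ∅ := Finset.card_eq_zero.1 (Nat.le_zero.1 hk)
    rw [this] at ha; exact absurd ha (Finset.notMem_empty a)
  | succ k ih =>
    intro B V hk hV hFB a ha wa hwa hex
    classical
    obtain ⟨s0, hs0B, hs0ne⟩ := hex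
    have hBV : B ⊆ V := by rcases hFB with ⟨w, rfl⟩; exact amax_subset
    by_cases hdeg : ∀ s1 ∈ B, s1 ≠ a →
        ∃ t : ℝ, 0 < t ∧ ∀ s ∈ B,
          dot wa s + t * dot (s1 - a) s = dot wa a + t * dot (s1 - a) a
    · -- fully degenerate: B lies on a ray from a; the hull is a segment
      set p := s0 - a with hp
      have hpne : p ≠ 0 := by rw [hp]; exact sub_ne_zero.2 hs0ne
      have hpp : 0 < dot p p := dot_self_pos hpne
      obtain ⟨t1, ht1, hE1⟩ := hdeg s0 hs0B hs0ne
      have hray : ∀ s ∈ B, s = a ∨ ∃ μ : ℝ, 0 < μ ∧ s = a + μ • p := by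
        intro s2 hs2B
        by_cases hs2a : s2 = a
        · exact Or.inl hs2a
        · right
          obtain ⟨t2, ht2, hE2⟩ := hdeg s2 hs2B hs2a
          set d := t1 • (s0 - a) - t2 • (s2 - a) with hd
          have hdval : ∀ y : Vec n, dot d y = t1 * dot (s0 - a) y - t2 * dot (s2 - a) y := by
            intro y; rw [hd, dot_sub_left, dot_smul_left, dot_smul_left]
          have hdots : ∀ s ∈ B, dot d s = dot d a := by
            intro s hs
            have h1 := hE1 s hs
            have h2 := hE2 s hs
            rw [hdval, hdval]
            linarith
          have hdd : dot d d = 0 := by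
            have hc : ∀ y : Vec n, dot y d = dot d y := fun y => dot_comm y d
            have h1 : dot (s0 - a) d = 0 := by
              rw [dot_sub_left]
              have := hdots s0 hs0B
              rw [hc s0, hc a]
              linarith
            have h2 : dot (s2 - a) d = 0 := by
              rw [dot_sub_left]
              have := hdots s2 hs2B
              rw [hc s2, hc a]
              linarith
            rw [hdval, h1, h2]; ring
          have hd0 : d = 0 := by
            by_contra hcon
            exact absurd hdd (ne_of_gt (dot_self_pos hcon))
          have hlin : t1 • (s0 - a) = t2 • (s2 - a) := by
            have h' : t1 • (s0 - a) - t2 • (s2 - a) = 0 := by rw [← hd, hd0]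
            exact sub_eq_zero.1 h'
          refine ⟨t1 / t2, div_pos ht1 ht2, ?_⟩
          have h2 : (t1 / t2) • p = s2 - a := by
            rw [hp, div_eq_mul_inv, mul_comm, mul_smul, hlin, smul_smul,
              inv_mul_cancel₀ (ne_of_gt ht2), one_smul]
          rw [h2]
          abel
      -- pick the farthest point m along the ray
      obtain ⟨m, hmB, hmmax⟩ := B.exists_max_image (fun s => dot p s) ⟨a, ha⟩
      have hps0 : dot p s0 = dot p a + dot p p := by
        have h' := dot_sub_right p s0 a
        rw [← hp] at h'
        linarith
      have hmgt : dot p a < dot p m := by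
        have := hmmax s0 hs0B
        linarith
      have hmne : m ≠ a := by
        intro h; rw [h] at hmgt; linarith
      rcases hray m hmB with h | ⟨μm, hμm, hmrep⟩
      · exact absurd h hmne
      have hdotrep : ∀ μ : ℝ, dot p (a + μ • p) = dot p a + μ * dot p p := by
        intro μ; rw [dot_add_right, dot_smul_right]
      have hBsub : ∀ s ∈ B, s ∈ segment ℝ a m := by
        intro s hsB
        rcases hray s hsB with hsa | ⟨μ, hμ, hsrep⟩
        · rw [hsa]; exact left_mem_segment ℝ a m
        · subst hsrep
          have hμle : μ ≤ μm := by
            have h1 := hmmax (a + μ • p) hsB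
            rw [hmrep, hdotrep, hdotrep] at h1
            nlinarith
          have hr0 : 0 ≤ μ / μm := le_of_lt (div_pos hμ hμm)
          have hr1 : μ / μm ≤ 1 := (div_le_one hμm).2 hμle
          refine ⟨1 - μ / μm, μ / μm, by linarith, hr0, by ring, ?_⟩
          rw [hmrep, smul_add, ← add_assoc, ← add_smul, smul_smul]
          have hc1 : 1 - μ / μm + μ / μm = 1 := by ring
          have hc2 : μ / μm * μm = μ := by field_simp
          rw [hc1, hc2, one_smul]
          -- align indentation fix
      have hseg : convexHull ℝ (B : Set (Vec n)) = segment ℝ a m := by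
        apply Set.Subset.antisymm
        · exact convexHull_min (fun s hs => hBsub s hs) (convex_segment a m)
        · rw [← convexHull_pair]
          apply convexHull_mono
          intro y hy
          rcases hy with rfl | hy
          · exact ha
          · rw [Set.mem_singleton_iff] at hy; subst hy; exact hmB
      exact ⟨m, hmB, hmne, B, hFB, Finset.Subset.refl B, hseg⟩
    · -- non-degenerate: some sweep strictly shrinks B
      push_neg at hdeg
      obtain ⟨s1, hs1B, hs1ne, hnd⟩ := hdeg
      have hgex : ∃ s ∈ B, 0 < dot (s1 - a) s - dot (s1 - a) a := by
        refine ⟨s1, hs1B, ?_⟩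
        have : dot (s1 - a) s1 - dot (s1 - a) a = dot (s1 - a) (s1 - a) := by
          rw [dot_sub_right]
        rw [this]
        exact dot_self_pos (sub_ne_zero.2 hs1ne)
      obtain ⟨t, htpos, haA, ⟨sb, hsbA, hsbg⟩, hallg⟩ := sweep hFB ha hwa hgex
      set A := amax B (wa + t • (s1 - a)) with hA
      have hAB : A ⊆ B := amax_subset
      have hAne : A ≠ B := by
        intro hABeq
        obtain ⟨s, hs, hne'⟩ := hnd t htpos
        apply hne'
        have hsA : s ∈ A := by rw [hABeq]; exact hs
        have := (mem_amax_iff_eq haA (hAB hsA)).1 hsA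
        rw [dot_add_left, dot_add_left, dot_smul_left, dot_smul_left] at this
        linarith
      have hAcard : A.card ≤ k := by
        have : A ⊂ B := Finset.ssubset_iff_subset_ne.2 ⟨hAB, hAne⟩
        have := Finset.card_lt_card this
        omega
      have hFBA : ∃ w, A = amax V w := by
        rcases hFB with ⟨w1, hw1⟩
        obtain ⟨w3, hw3⟩ := amax_amax V hV w1 (wa + t • (s1 - a))
        exact ⟨w3, by rw [hA, hw1, ← hw3]⟩
      have hsbne : sb ≠ a := by intro h; rw [h] at hsbg; linarith
      obtain ⟨a', ha'A, ha'ne, C, hCFB, hCA, hCseg⟩ :=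
        ih A V hAcard hV hFBA a (by
          rw [hA] at haA ⊢; exact haA) wa hwa ⟨sb, hsbA, hsbne⟩
      exact ⟨a', hAB ha'A, ha'ne, C, hCFB, subset_trans hCA hAB, hCseg⟩

end

section
variable {n : ℕ}

lemma isEdge_of_amax_seg {V C : Finset (Vec n)} (hV : V.Nonempty) (hC : ∃ w, C = amax V w)
    {a a' : Vec n} (hseg : convexHull ℝ (C : Set (Vec n)) = segment ℝ a a') (hne : a ≠ a') :
    IsEdge (convexHull ℝ (V : Set (Vec n))) (segment ℝ a a') := by
  constructor
  · rcases hC with ⟨w, rfl⟩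
    exact ⟨w, by rw [← hseg]; exact (face_eq_hull_amax V w hV).symm⟩
  · exact sdim_segment hne

/-- One monotone edge upward in direction `u` (Lemma U). -/

lemma lemU {V B : Finset (Vec n)} (hV : V.Nonempty) (hFB : ∃ w, B = amax V w)
    {a : Vec n} (ha : a ∈ B) {wa : Vec n}
    (hwa : ∀ s ∈ V, s ≠ a → dot wa s < dot wa a)
    {u : Vec n} (hex : ∃ s ∈ B, 0 < dot u s - dot u a) :
    ∃ a' ∈ B, 0 < dot u a' - dot u a ∧ ∃ C : Finset (Vec n), (∃ w, C = amax V w) ∧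
      convexHull ℝ (C : Set (Vec n)) = segment ℝ a a' := by
  obtain ⟨t, htpos, haA, ⟨sb, hsbA, hsbg⟩, hallg⟩ := sweep hFB ha hwa hex
  set A := amax B (wa + t • u) with hA
  have hAB : A ⊆ B := amax_subset
  have hFBA : ∃ w, A = amax V w := by
    rcases hFB with ⟨w1, hw1⟩
    obtain ⟨w3, hw3⟩ := amax_amax V hV w1 (wa + t • u)
    exact ⟨w3, by rw [hA, hw1, ← hw3]⟩
  have hsbne : sb ≠ a := by intro h; rw [h] at hsbg; linarith
  obtain ⟨a', ha'A, ha'ne, C, hCFB, _, hCseg⟩ :=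
    lemX A.card A V (le_refl _) hV hFBA a haA wa hwa ⟨sb, hsbA, hsbne⟩
  exact ⟨a', hAB ha'A, hallg a' ha'A ha'ne, C, hCFB, hCseg⟩

/-- Monotone descending walk from a vertex `x` to the unique minimum `a` of a face. -/

lemma walk_down {V : Finset (Vec n)} (hV : V.Nonempty) (v : Vec n)
    (hor : Oriented (convexHull ℝ (V : Set (Vec n))) v)
    {B : Finset (Vec n)} (hFB : ∃ w, B = amax V w)
    {a : Vec n} (ha : a ∈ B) (hamin : ∀ s ∈ B, dot v a ≤ dot v s) :
    ∀ (N : ℕ) (x : Vec n), (B.filter (fun s => dot v s < dot v x)).card ≤ N →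
      x ∈ B → (∃ wx, amax V wx = {x}) →
      Relation.ReflTransGen (edgeCover (convexHull ℝ (V : Set (Vec n))) v) a x := by
  classical
  intro N
  induction N with
  | zero =>
    intro x hcard hxB hxcert
    by_cases hxa : x = a
    · rw [hxa]
    · exfalso
      -- x must also be a minimizer, else the filter is nonempty
      have hmin : ∀ s ∈ B, dot v x ≤ dot v s := by
        intro s hs
        by_contra hcon
        push_neg at hcon
        have : s ∈ B.filter (fun s => dot v s < dot v x) := Finset.mem_filter.2 ⟨hs, hcon⟩
        have := Finset.card_pos.2 ⟨s, this⟩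
        omega
      -- both a and x lie in the v-minimal face, giving a v-perpendicular edge
      set A1 := amax B (-v) with hA1
      have hxA1 : x ∈ A1 := mem_amax.2 ⟨hxB, fun y hy => by
        rw [dot_neg_left, dot_neg_left]
        have := hmin y hy
        linarith⟩
      have haA1 : a ∈ A1 := mem_amax.2 ⟨ha, fun y hy => by
        rw [dot_neg_left, dot_neg_left]
        have := hamin y hy
        linarith⟩
      have hFBA1 : ∃ w, A1 = amax V w := by
        rcases hFB with ⟨w1, hw1⟩
        obtain ⟨w3, hw3⟩ := amax_amax V hV w1 (-v)
        exact ⟨w3, by rw [hA1, hw1, ← hw3]⟩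
      obtain ⟨wx, hwx⟩ := hxcert
      obtain ⟨a'', ha''A1, ha''ne, C, hCFB, hCsub, hCseg⟩ :=
        lemX A1.card A1 V (le_refl _) hV hFBA1 x hxA1 wx
          (strict_of_amax_singleton hwx).2 ⟨a, haA1, fun h => hxa h.symm⟩
      have hedge : IsEdge (convexHull ℝ (V : Set (Vec n))) (segment ℝ x a'') :=
        isEdge_of_amax_seg hV hCFB hCseg (fun h => ha''ne h.symm)
      have hd : a'' - x ∈ (affineSpan ℝ (segment ℝ x a'')).direction := by
        have h1 : a'' ∈ affineSpan ℝ (segment ℝ x a'') :=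
          subset_affineSpan ℝ _ (right_mem_segment ℝ x a'')
        have h2 : x ∈ affineSpan ℝ (segment ℝ x a'') :=
          subset_affineSpan ℝ _ (left_mem_segment ℝ x a'')
        have := AffineSubspace.vsub_mem_direction h1 h2
        rwa [vsub_eq_sub] at this
      have hdne : a'' - x ≠ 0 := sub_ne_zero.2 ha''ne
      have hdv : dot (a'' - x) v = 0 := by
        have := dot_eq_of_mem_amax ha''A1 hxA1
        rw [dot_neg_left, dot_neg_left] at this
        rw [dot_sub_left, dot_comm a'' v, dot_comm x v]
        linarith
      exact hor (segment ℝ x a'') hedge (a'' - x) hd hdne hdv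
  | succ N ihN =>
    intro x hcard hxB hxcert
    by_cases hex : ∃ s ∈ B, dot v s < dot v x
    · obtain ⟨sl, hslB, hsl⟩ := hex
      obtain ⟨wx, hwx⟩ := hxcert
      have hux : ∃ s ∈ B, 0 < dot (-v) s - dot (-v) x := by
        refine ⟨sl, hslB, ?_⟩
        rw [dot_neg_left, dot_neg_left]
        linarith
      obtain ⟨x', hx'B, hx'lt, C, hCFB, hCseg⟩ :=
        lemU hV hFB hxB (strict_of_amax_singleton hwx).2 hux
      have hx'val : dot v x' < dot v x := by
        rw [dot_neg_left, dot_neg_left] at hx'lt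
        linarith
      have hne : x ≠ x' := by intro h; rw [h] at hx'val; linarith
      have hedge : IsEdge (convexHull ℝ (V : Set (Vec n))) (segment ℝ x x') :=
        isEdge_of_amax_seg hV hCFB hCseg hne
      have hstep : edgeCover (convexHull ℝ (V : Set (Vec n))) v x' x := by
        constructor
        · rw [segment_symm]; exact hedge
        · rw [dot_sub_left, dot_comm x v, dot_comm x' v]; linarith
      have hx'cert : ∃ w', amax V w' = {x'} := vertex_of_segment hV hCFB hCseg hne
      have hsub : B.filter (fun s => dot v s < dot v x') ⊆
          B.filter (fun s => dot v s < dot v x) := by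
        intro s hs
        rcases Finset.mem_filter.1 hs with ⟨h1, h2⟩
        exact Finset.mem_filter.2 ⟨h1, lt_trans h2 hx'val⟩
      have hproper : x' ∈ B.filter (fun s => dot v s < dot v x) \
          B.filter (fun s => dot v s < dot v x') := by
        rw [Finset.mem_sdiff]
        exact ⟨Finset.mem_filter.2 ⟨hx'B, hx'val⟩,
          fun h => lt_irrefl _ (Finset.mem_filter.1 h).2⟩
      have hcard' : (B.filter (fun s => dot v s < dot v x')).card ≤ N := by
        have hss : B.filter (fun s => dot v s < dot v x') ⊂
            B.filter (fun s => dot v s < dot v x) := by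
          rw [Finset.ssubset_iff_of_subset hsub]
          rcases Finset.mem_sdiff.1 hproper with ⟨h1, h2⟩
          exact ⟨x', h1, h2⟩
        have := Finset.card_lt_card hss
        omega
      have hpath := ihN x' hcard' hx'B hx'cert
      exact Relation.ReflTransGen.tail hpath hstep
    · -- x is a minimizer: same terminal argument as above
      push_neg at hex
      by_cases hxa : x = a
      · rw [hxa]
      · exfalso
        set A1 := amax B (-v) with hA1
        have hxA1 : x ∈ A1 := mem_amax.2 ⟨hxB, fun y hy => by
          rw [dot_neg_left, dot_neg_left]
          have := hex y hy
          linarith⟩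
        have haA1 : a ∈ A1 := mem_amax.2 ⟨ha, fun y hy => by
          rw [dot_neg_left, dot_neg_left]
          have := hamin y hy
          linarith⟩
        have hFBA1 : ∃ w, A1 = amax V w := by
          rcases hFB with ⟨w1, hw1⟩
          obtain ⟨w3, hw3⟩ := amax_amax V hV w1 (-v)
          exact ⟨w3, by rw [hA1, hw1, ← hw3]⟩
        obtain ⟨wx, hwx⟩ := hxcert
        obtain ⟨a'', ha''A1, ha''ne, C, hCFB, hCsub, hCseg⟩ :=
          lemX A1.card A1 V (le_refl _) hV hFBA1 x hxA1 wx
            (strict_of_amax_singleton hwx).2 ⟨a, haA1, fun h => hxa h.symm⟩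
        have hedge : IsEdge (convexHull ℝ (V : Set (Vec n))) (segment ℝ x a'') :=
          isEdge_of_amax_seg hV hCFB hCseg (fun h => ha''ne h.symm)
        have hd : a'' - x ∈ (affineSpan ℝ (segment ℝ x a'')).direction := by
          have h1 : a'' ∈ affineSpan ℝ (segment ℝ x a'') :=
            subset_affineSpan ℝ _ (right_mem_segment ℝ x a'')
          have h2 : x ∈ affineSpan ℝ (segment ℝ x a'') :=
            subset_affineSpan ℝ _ (left_mem_segment ℝ x a'')
          have := AffineSubspace.vsub_mem_direction h1 h2
          rwa [vsub_eq_sub] at this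
        have hdne : a'' - x ≠ 0 := sub_ne_zero.2 ha''ne
        have hdv : dot (a'' - x) v = 0 := by
          have := dot_eq_of_mem_amax ha''A1 hxA1
          rw [dot_neg_left, dot_neg_left] at this
          rw [dot_sub_left, dot_comm a'' v, dot_comm x v]
          linarith
        exact hor (segment ℝ x a'') hedge (a'' - x) hd hdne hdv

end

section
variable {n : ℕ}

lemma mainWalk {V : Finset (Vec n)} (hV : V.Nonempty) (v : Vec n)
    (hor : Oriented (convexHull ℝ (V : Set (Vec n))) v)
    {b : Vec n} (hbcert : ∃ wb, amax V wb = {b}) :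
    ∀ (N : ℕ) (a c : Vec n) (κ : ℝ),
      (V.filter (fun s => dot v a < dot v s)).card ≤ N →
      (∃ wa, amax V wa = {a}) → 0 < κ →
      (∀ s ∈ V, dot c s ≤ dot c a) →
      (∀ s ∈ V, dot c s + κ * dot v s ≤ dot c b + κ * dot v b) →
      Relation.ReflTransGen (edgeCover (convexHull ℝ (V : Set (Vec n))) v) a b := by
  classical
  obtain ⟨wb, hwb⟩ := hbcert
  have hbV : b ∈ V := (strict_of_amax_singleton hwb).1
  intro N
  induction N with
  | zero =>
    intro a c κ hcard hacert hκ hmax1 hmax2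
    by_cases hab : a = b
    · rw [hab]
    -- with an empty filter, the first case of the sweep applies
    have hc1 : ∀ s ∈ V, dot v a < dot v s →
        dot c s + κ * dot v s ≤ dot c a + κ * dot v a := by
      intro s hs hlt
      exfalso
      have : s ∈ V.filter (fun s => dot v a < dot v s) := Finset.mem_filter.2 ⟨hs, hlt⟩
      have := Finset.card_pos.2 ⟨s, this⟩
      omega
    -- a and b both lie in the argmax of c + κ v
    set A0 := amax V (c + κ • v) with hA0
    have hcval : ∀ y : Vec n, dot (c + κ • v) y = dot c y + κ * dot v y := by
      intro y; rw [dot_add_left, dot_smul_left]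
    have haA0 : a ∈ A0 := by
      refine mem_amax.2 ⟨(strict_of_amax_singleton hacert.choose_spec).1, fun y hy => ?_⟩
      rw [hcval, hcval]
      by_cases hyS : dot v a < dot v y
      · exact hc1 y hy hyS
      · push_neg at hyS
        have h1 := hmax1 y hy
        nlinarith
    have hbA0 : b ∈ A0 := by
      refine mem_amax.2 ⟨hbV, fun y hy => ?_⟩
      rw [hcval, hcval]
      exact hmax2 y hy
    have hmin : ∀ s ∈ A0, dot v a ≤ dot v s := by
      intro s hsA0
      have heq := dot_eq_of_mem_amax hsA0 haA0
      rw [hcval, hcval] at heq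
      have h1 := hmax1 s (amax_subset hsA0)
      nlinarith
    exact walk_down hV v hor ⟨c + κ • v, rfl⟩ haA0 hmin
      ((A0.filter (fun s => dot v s < dot v b)).card) b (le_refl _) hbA0 ⟨wb, hwb⟩
  | succ N ihN =>
    intro a c κ hcard hacert hκ hmax1 hmax2
    by_cases hab : a = b
    · rw [hab]
    obtain ⟨wa, hwa⟩ := hacert
    have haV : a ∈ V := (strict_of_amax_singleton hwa).1
    set Sp := V.filter (fun s => dot v a < dot v s) with hSp
    by_cases hc1 : ∀ s ∈ Sp, dot c s + κ * dot v s ≤ dot c a + κ * dot v a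
    · -- terminal sweep, as in the zero case
      set A0 := amax V (c + κ • v) with hA0
      have hcval : ∀ y : Vec n, dot (c + κ • v) y = dot c y + κ * dot v y := by
        intro y; rw [dot_add_left, dot_smul_left]
      have haA0 : a ∈ A0 := by
        refine mem_amax.2 ⟨haV, fun y hy => ?_⟩
        rw [hcval, hcval]
        by_cases hyS : dot v a < dot v y
        · exact hc1 y (Finset.mem_filter.2 ⟨hy, hyS⟩)
        · push_neg at hyS
          have h1 := hmax1 y hy
          nlinarith
      have hbA0 : b ∈ A0 := by
        refine mem_amax.2 ⟨hbV, fun y hy => ?_⟩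
        rw [hcval, hcval]
        exact hmax2 y hy
      have hmin : ∀ s ∈ A0, dot v a ≤ dot v s := by
        intro s hsA0
        have heq := dot_eq_of_mem_amax hsA0 haA0
        rw [hcval, hcval] at heq
        have h1 := hmax1 s (amax_subset hsA0)
        nlinarith
      exact walk_down hV v hor ⟨c + κ • v, rfl⟩ haA0 hmin
        ((A0.filter (fun s => dot v s < dot v b)).card) b (le_refl _) hbA0 ⟨wb, hwb⟩
    · -- strictly interior sweep: find an ascending edge at a
      push_neg at hc1
      obtain ⟨s1, hs1Sp, hs1gt⟩ := hc1
      have hSpne : Sp.Nonempty := ⟨s1, hs1Sp⟩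
      obtain ⟨sm, hsmSp, hsmmin⟩ :=
        Sp.exists_min_image (fun s => (dot c a - dot c s) / (κ * (dot v s - dot v a))) hSpne
      set t := (dot c a - dot c sm) / (κ * (dot v sm - dot v a)) with ht
      have hsmV : sm ∈ V := (Finset.mem_filter.1 hsmSp).1
      have hsmgt : dot v a < dot v sm := (Finset.mem_filter.1 hsmSp).2
      have hdenpos : 0 < κ * (dot v sm - dot v a) := by
        apply mul_pos hκ; linarith
      have ht0 : 0 ≤ t := div_nonneg (by linarith [hmax1 sm hsmV]) (le_of_lt hdenpos)
      have ht1 : t < 1 := by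
        have hs1V : s1 ∈ V := (Finset.mem_filter.1 hs1Sp).1
        have hs1gt' : dot v a < dot v s1 := (Finset.mem_filter.1 hs1Sp).2
        have hden1 : 0 < κ * (dot v s1 - dot v a) := by
          apply mul_pos hκ; linarith
        have hr1 : (dot c a - dot c s1) / (κ * (dot v s1 - dot v a)) < 1 := by
          rw [div_lt_one hden1]; nlinarith
        calc t ≤ (dot c a - dot c s1) / (κ * (dot v s1 - dot v a)) := hsmmin s1 hs1Sp
          _ < 1 := hr1
      set c' := c + (t * κ) • v with hc'
      have hc'val : ∀ y : Vec n, dot c' y = dot c y + t * κ * dot v y := by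
        intro y; rw [hc', dot_add_left, dot_smul_left]
      have haA' : a ∈ amax V c' := by
        refine mem_amax.2 ⟨haV, fun y hy => ?_⟩
        rw [hc'val, hc'val]
        by_cases hyS : dot v a < dot v y
        · have hySp : y ∈ Sp := Finset.mem_filter.2 ⟨hy, hyS⟩
          have hty := hsmmin y hySp
          have hdeny : 0 < κ * (dot v y - dot v a) := by
            apply mul_pos hκ; linarith
          have : t * (κ * (dot v y - dot v a)) ≤ dot c a - dot c y := by
            calc t * (κ * (dot v y - dot v a))
                ≤ (dot c a - dot c y) / (κ * (dot v y - dot v a)) * (κ * (dot v y - dot v a)) :=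
                  mul_le_mul_of_nonneg_right (hsmmin y hySp) (le_of_lt hdeny)
              _ = dot c a - dot c y := div_mul_cancel₀ _ (ne_of_gt hdeny)
          nlinarith
        · push_neg at hyS
          have h1 := hmax1 y hy
          have h2 : 0 ≤ t * κ := mul_nonneg ht0 (le_of_lt hκ)
          nlinarith
      have hsmA' : sm ∈ amax V c' := by
        rw [mem_amax_iff_eq haA' hsmV, hc'val, hc'val, ht]
        have hne : dot v sm - dot v a ≠ 0 := sub_ne_zero.2 (ne_of_gt hsmgt)
        field_simp
        ring
      obtain ⟨a', ha'A', ha'gt, C, hCFB, hCseg⟩ :=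
        lemU hV ⟨c', rfl⟩ haA' (strict_of_amax_singleton hwa).2
          (u := v) ⟨sm, hsmA', by linarith⟩
      have ha'V : a' ∈ V := amax_subset ha'A'
      have ha'gtv : dot v a < dot v a' := by linarith
      have hne : a ≠ a' := by intro h; rw [h] at ha'gtv; linarith
      have hstep : edgeCover (convexHull ℝ (V : Set (Vec n))) v a a' := by
        refine ⟨isEdge_of_amax_seg hV hCFB hCseg hne, ?_⟩
        rw [dot_sub_left, dot_comm a' v, dot_comm a v]
        linarith
      have ha'cert : ∃ w', amax V w' = {a'} := vertex_of_segment hV hCFB hCseg hne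
      -- new parameters
      set κ' := (1 - t) * κ with hκ'
      have hκ'pos : 0 < κ' := mul_pos (by linarith) hκ
      have hmax1' : ∀ s ∈ V, dot c' s ≤ dot c' a' := (mem_amax.1 ha'A').2
      have hmax2' : ∀ s ∈ V, dot c' s + κ' * dot v s ≤ dot c' b + κ' * dot v b := by
        intro s hs
        have := hmax2 s hs
        rw [hc'val, hc'val, hκ']
        nlinarith
      have hcard' : (V.filter (fun s => dot v a' < dot v s)).card ≤ N := by
        have hsub : V.filter (fun s => dot v a' < dot v s) ⊆ Sp := by
          intro s hs
          rcases Finset.mem_filter.1 hs with ⟨h1, h2⟩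
          exact Finset.mem_filter.2 ⟨h1, by linarith⟩
        have hproper : a' ∈ Sp ∧ a' ∉ V.filter (fun s => dot v a' < dot v s) := by
          exact ⟨Finset.mem_filter.2 ⟨ha'V, ha'gtv⟩,
            fun h => lt_irrefl _ (Finset.mem_filter.1 h).2⟩
        have hss : V.filter (fun s => dot v a' < dot v s) ⊂ Sp := by
          rw [Finset.ssubset_iff_of_subset hsub]
          exact ⟨a', hproper.1, hproper.2⟩
        have := Finset.card_lt_card hss
        omega
      have hpath := ihN a' c' κ' hcard' ha'cert hκ'pos hmax1' hmax2'
      exact Relation.ReflTransGen.head hstep hpath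

end

end Aux

/-- For a polytope `P` oriented by `v`, if `(F, G) ∈ F^φ` then
`top(F) ≤ bot(G)` in the partial order induced by `v` on the vertices of `P` (the transitive
closure of the edge covering relation). -/
theorem stmt6 {n : ℕ} (P : Set (Vec n)) (v : Vec n)
    (hP : IsPolytope P) (hor : Oriented P v)
    (F G : Set (Vec n)) (hF : IsFace P F) (hG : IsFace P G)
    (hFne : F.Nonempty) (hGne : G.Nonempty) (hFG : InFphi P v F G)
    (tF bG : Vec n)
    (htF : tF ∈ F ∧ IsFace P {tF} ∧ ∀ y ∈ F, dot v y ≤ dot v tF)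
    (hbG : bG ∈ G ∧ IsFace P {bG} ∧ ∀ y ∈ G, dot v bG ≤ dot v y) :
    Relation.ReflTransGen (edgeCover P v) tF bG := by
  classical
  obtain ⟨V, hPV⟩ := hP
  subst hPV
  -- tF and bG lie in P
  have htFP : tF ∈ convexHull ℝ (V : Set (Vec n)) := by
    rcases hF with ⟨cF, hcF⟩
    have := htF.1
    rw [hcF] at this
    exact this.1
  have hbGP : bG ∈ convexHull ℝ (V : Set (Vec n)) := by
    rcases hG with ⟨cG, hcG⟩
    have := hbG.1
    rw [hcG] at this
    exact this.1
  have hV : V.Nonempty := by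
    by_contra h
    rw [Finset.not_nonempty_iff_eq_empty] at h
    rw [h] at htFP
    simp [convexHull_empty] at htFP
  -- vertex certificates
  obtain ⟨wa, hwa⟩ := Aux.vertex_strict hV htF.2.1
  obtain ⟨wb, hwb⟩ := Aux.vertex_strict hV hbG.2.1
  -- the fiber-minimality property
  have hstar : ∀ q p : Vec n, q ∈ convexHull ℝ (V : Set (Vec n)) →
      p ∈ convexHull ℝ (V : Set (Vec n)) → q + p = tF + bG → dot v p ≤ dot v bG := by
    intro q p hq hp hqp
    by_contra hcon
    push_neg at hcon
    apply hFG
    refine ⟨tF, htF.1, bG, hbG.1, dot (tF - bG) v - dot (q - p) v, ?_, ?_⟩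
    · have hsum : dot v q + dot v p = dot v tF + dot v bG := by
        have h := congrArg (fun y => dot v y) hqp
        simpa [Aux.dot_add_right] using h
      rw [Aux.dot_sub_left, Aux.dot_sub_left, Aux.dot_comm tF v, Aux.dot_comm bG v,
        Aux.dot_comm q v, Aux.dot_comm p v]
      linarith
    · refine ⟨q, hq, p, hp, ?_⟩
      have h2 : dot (tF - bG) v - (dot (tF - bG) v - dot (q - p) v) = dot (q - p) v := by
        ring
      rw [h2, hqp]
  obtain ⟨c, κ, hκ, h1, h2⟩ :=
    Aux.exists_functional (Aux.strict_of_amax_singleton hwa).1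
      (Aux.strict_of_amax_singleton hwb).1 hstar
  exact Aux.mainWalk hV v hor ⟨wb, hwb⟩
    ((V.filter (fun s => dot v tF < dot v s)).card) tF c κ (le_refl _) ⟨wa, hwa⟩ hκ h1 h2
end
end

section
/- Let P ⊆ ℝⁿ be a polytope. There is a surjection from the set of pairs of nonempty faces (F,G) of P with codim(cone(−N_P(F) ∪ N_P(G))) = 1 onto the set of directions, up to nonzero scalar multiple, of the edges of P ∩ ρ_zP over all z ∈ P: each such pair (F,G) determines an edge G ∩ ρ_zF of P ∩ ρ_zP for any z ∈ (relint(F)+relint(G))/2, and every edge of P ∩ ρ_zP arises in this way. -/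
open scoped BigOperators

noncomputable section

-- dot as a bilinear-ish linear map in the second argument
def dotL {n : ℕ} (c : Vec n) : Vec n →ₗ[ℝ] ℝ where
  toFun x := dot c x
  map_add' x y := by simp [dot, mul_add, Finset.sum_add_distrib]
  map_smul' t x := by simp [dot, Finset.mul_sum, mul_left_comm]

lemma dotL_apply {n : ℕ} (c x : Vec n) : dotL c x = dot c x := rfl

lemma dot_comm {n : ℕ} (x y : Vec n) : dot x y = dot y x := by
  simp [dot, mul_comm]

lemma dot_add_right {n : ℕ} (c x y : Vec n) : dot c (x + y) = dot c x + dot c y :=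
  (dotL c).map_add x y

lemma dot_smul_right {n : ℕ} (c : Vec n) (t : ℝ) (x : Vec n) : dot c (t • x) = t * dot c x :=
  (dotL c).map_smul t x

lemma dot_sub_right {n : ℕ} (c x y : Vec n) : dot c (x - y) = dot c x - dot c y :=
  map_sub (dotL c) x y

lemma dot_add_left {n : ℕ} (a b x : Vec n) : dot (a + b) x = dot a x + dot b x := by
  rw [dot_comm, dot_add_right, dot_comm x a, dot_comm x b]

lemma dot_sub_left {n : ℕ} (a b x : Vec n) : dot (a - b) x = dot a x - dot b x := by
  rw [dot_comm, dot_sub_right, dot_comm x a, dot_comm x b]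

lemma dot_smul_left {n : ℕ} (t : ℝ) (a x : Vec n) : dot (t • a) x = t * dot a x := by
  rw [dot_comm, dot_smul_right, dot_comm x a]

lemma dot_zero_left {n : ℕ} (x : Vec n) : dot 0 x = 0 := by simp [dot]

lemma dot_neg_left {n : ℕ} (a x : Vec n) : dot (-a) x = - dot a x := by
  simp [dot, neg_mul]

/-- transfer to Euclidean space -/
def toE {n : ℕ} : Vec n ≃ₗ[ℝ] EuclideanSpace ℝ (Fin n) :=
  (WithLp.linearEquiv 2 ℝ (Fin n → ℝ)).symm

lemma dot_eq_inner {n : ℕ} (x y : Vec n) :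
    dot x y = (inner ℝ (toE x) (toE y) : ℝ) := by
  rw [PiLp.inner_apply]
  simp [dot, toE, mul_comm]

/-- orthogonal complement, transported to `Vec n` -/
def perp {n : ℕ} (U : Submodule ℝ (Vec n)) : Submodule ℝ (Vec n) :=
  ((U.map ((toE : Vec n ≃ₗ[ℝ] EuclideanSpace ℝ (Fin n)) : Vec n →ₗ[ℝ] EuclideanSpace ℝ (Fin n)))ᗮ).map
    ((toE.symm : EuclideanSpace ℝ (Fin n) ≃ₗ[ℝ] Vec n) : EuclideanSpace ℝ (Fin n) →ₗ[ℝ] Vec n)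

lemma mem_perp {n : ℕ} (U : Submodule ℝ (Vec n)) (v : Vec n) :
    v ∈ perp U ↔ ∀ u ∈ U, dot u v = 0 := by
  constructor
  · rintro ⟨w, hw, rfl⟩ u hu
    rw [dot_eq_inner]
    simpa using hw (toE u) ⟨u, hu, rfl⟩
  · intro h
    refine ⟨toE v, ?_, by simp⟩
    rintro w ⟨u, hu, rfl⟩
    rw [LinearEquiv.coe_coe, ← dot_eq_inner]
    exact h u hu

lemma finrank_perp_add {n : ℕ} (U : Submodule ℝ (Vec n)) :
    Module.finrank ℝ (perp U) + Module.finrank ℝ U = n := by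
  have h1 : Module.finrank ℝ (perp U) =
      Module.finrank ℝ ((U.map ((toE : Vec n ≃ₗ[ℝ] EuclideanSpace ℝ (Fin n)) : Vec n →ₗ[ℝ] EuclideanSpace ℝ (Fin n)))ᗮ) :=
    LinearEquiv.finrank_map_eq _ _
  have h2 := LinearEquiv.finrank_map_eq (toE : Vec n ≃ₗ[ℝ] EuclideanSpace ℝ (Fin n)) U
  have h3 := Submodule.finrank_add_finrank_orthogonal
    (K := U.map ((toE : Vec n ≃ₗ[ℝ] EuclideanSpace ℝ (Fin n)) : Vec n →ₗ[ℝ] EuclideanSpace ℝ (Fin n)))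
  rw [finrank_euclideanSpace_fin] at h3
  rw [h1, ← h2, add_comm]
  exact h3

lemma perp_perp {n : ℕ} (U : Submodule ℝ (Vec n)) : perp (perp U) = U := by
  ext v
  rw [mem_perp]
  constructor
  · intro h
    -- v with dot u v = 0 for all u ∈ perp U
    -- transfer: toE v ∈ ((map toE U)ᗮ)ᗮ = map toE U
    have hv : toE v ∈ ((U.map ((toE : Vec n ≃ₗ[ℝ] EuclideanSpace ℝ (Fin n)) : Vec n →ₗ[ℝ] EuclideanSpace ℝ (Fin n)))ᗮ)ᗮ := by
      intro w hw
      have hw' : toE.symm w ∈ perp U := ⟨w, hw, rfl⟩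
      have := h _ hw'
      rw [dot_eq_inner] at this
      simpa using this
    rw [Submodule.orthogonal_orthogonal] at hv
    obtain ⟨u, hu, huv⟩ := hv
    have : u = v := by
      have := congrArg (toE.symm) huv
      simpa using this
    rwa [← this]
  · intro hv u hu
    rw [mem_perp] at hu
    rw [dot_comm]
    exact hu v hv

lemma perp_sup {n : ℕ} (U V : Submodule ℝ (Vec n)) : perp (U ⊔ V) = perp U ⊓ perp V := by
  ext v
  simp only [Submodule.mem_inf, mem_perp]
  constructor
  · intro h
    exact ⟨fun u hu => h u (Submodule.mem_sup_left hu),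
           fun u hu => h u (Submodule.mem_sup_right hu)⟩
  · rintro ⟨h1, h2⟩ u hu
    rcases Submodule.mem_sup.1 hu with ⟨a, ha, b, hb, rfl⟩
    rw [dot_add_left, h1 a ha, h2 b hb, add_zero]

lemma perp_inf {n : ℕ} (U V : Submodule ℝ (Vec n)) : perp (U ⊓ V) = perp U ⊔ perp V := by
  have := perp_sup (perp U) (perp V)
  rw [perp_perp, perp_perp] at this
  rw [← this, perp_perp]

/-- metric characterization of membership in the intrinsic interior -/
lemma mem_intrinsicInterior_iff' {n : ℕ} (P : Set (Vec n)) (x : Vec n) :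
    x ∈ intrinsicInterior ℝ P ↔
      x ∈ affineSpan ℝ P ∧ ∃ δ > (0:ℝ), ∀ a ∈ affineSpan ℝ P, ‖a - x‖ < δ → a ∈ P := by
  constructor
  · rintro ⟨y, hy, rfl⟩
    obtain ⟨δ, hδ, hball⟩ := Metric.mem_nhds_iff.1 (mem_interior_iff_mem_nhds.1 hy)
    refine ⟨y.2, δ, hδ, fun a ha hnorm => ?_⟩
    have : (⟨a, ha⟩ : affineSpan ℝ P) ∈ Metric.ball y δ := by
      rw [Metric.mem_ball, Subtype.dist_eq, dist_eq_norm]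
      exact hnorm
    exact hball this
  · rintro ⟨hA, δ, hδ, h⟩
    refine ⟨⟨x, hA⟩, ?_, rfl⟩
    refine mem_interior.2 ⟨Metric.ball ⟨x, hA⟩ δ, ?_, Metric.isOpen_ball,
      Metric.mem_ball_self hδ⟩
    intro b hb
    rw [Metric.mem_ball, Subtype.dist_eq, dist_eq_norm] at hb
    exact h ↑b b.2 hb

/-- moving from a relative interior point in a direction of the span stays in the set -/
lemma relint_move {n : ℕ} {G : Set (Vec n)} {g d : Vec n}
    (hg : g ∈ intrinsicInterior ℝ G) (hd : d ∈ vectorSpan ℝ G) :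
    ∃ ε > (0:ℝ), ∀ t : ℝ, |t| ≤ ε → g + t • d ∈ G := by
  obtain ⟨hA, δ, hδ, h⟩ := (mem_intrinsicInterior_iff' G g).1 hg
  refine ⟨δ / (2 * (‖d‖ + 1)), by positivity, fun t ht => ?_⟩
  have hmem : g + t • d ∈ affineSpan ℝ G := by
    have := AffineSubspace.vadd_mem_of_mem_direction
      (v := t • d) (Submodule.smul_mem _ t (by rwa [direction_affineSpan])) hA
    simpa [vadd_eq_add, add_comm] using this
  refine h _ hmem ?_
  have h1 : ‖g + t • d - g‖ = |t| * ‖d‖ := by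
    simp [norm_smul]
  rw [h1]
  have hd1 : ‖d‖ < ‖d‖ + 1 := by linarith
  calc |t| * ‖d‖ ≤ (δ / (2 * (‖d‖ + 1))) * ‖d‖ := by
        apply mul_le_mul_of_nonneg_right ht (norm_nonneg d)
    _ < δ := by
        rw [div_mul_eq_mul_div, div_lt_iff₀ (by positivity)]
        nlinarith [norm_nonneg d, hδ]

/-- combination of a point of a convex set with a relative interior point is relative interior -/
lemma combo_mem_intrinsicInterior {n : ℕ} {P : Set (Vec n)} (hP : Convex ℝ P)
    {y y₀ : Vec n} (hy : y ∈ P) (hy₀ : y₀ ∈ intrinsicInterior ℝ P)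
    {t : ℝ} (ht : 0 < t) (ht1 : t ≤ 1) : y + t • (y₀ - y) ∈ intrinsicInterior ℝ P := by
  obtain ⟨hA₀, δ, hδ, h⟩ := (mem_intrinsicInterior_iff' P y₀).1 hy₀
  have hAy : y ∈ affineSpan ℝ P := subset_affineSpan ℝ P hy
  have hAx : y + t • (y₀ - y) ∈ affineSpan ℝ P := by
    have hv : t • (y₀ - y) ∈ (affineSpan ℝ P).direction :=
      Submodule.smul_mem _ t (AffineSubspace.vsub_mem_direction hA₀ hAy)
    simpa [vadd_eq_add, add_comm] using AffineSubspace.vadd_mem_of_mem_direction hv hAy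
  rw [mem_intrinsicInterior_iff']
  refine ⟨hAx, t * δ, by positivity, fun a ha hnorm => ?_⟩
  set xt := y + t • (y₀ - y) with hxt
  -- b := y₀ + t⁻¹ • (a - xt)
  have hbA : y₀ + t⁻¹ • (a - xt) ∈ affineSpan ℝ P := by
    have hv : t⁻¹ • (a - xt) ∈ (affineSpan ℝ P).direction :=
      Submodule.smul_mem _ _ (AffineSubspace.vsub_mem_direction ha hAx)
    simpa [vadd_eq_add, add_comm] using AffineSubspace.vadd_mem_of_mem_direction hv hA₀
  have hbP : y₀ + t⁻¹ • (a - xt) ∈ P := by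
    refine h _ hbA ?_
    have : y₀ + t⁻¹ • (a - xt) - y₀ = t⁻¹ • (a - xt) := by ring_nf
    rw [this, norm_smul]
    rw [Real.norm_eq_abs, abs_inv, abs_of_pos ht]
    calc t⁻¹ * ‖a - xt‖ < t⁻¹ * (t * δ) := by
          apply mul_lt_mul_of_pos_left hnorm (by positivity)
      _ = δ := by field_simp
  have key : a = (1 - t) • y + t • (y₀ + t⁻¹ • (a - xt)) := by
    have htne : t ≠ 0 := ne_of_gt ht
    rw [hxt]
    rw [smul_add, smul_smul, mul_inv_cancel₀ htne, one_smul]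
    module
  rw [key]
  exact hP hy hbP (by linarith) (le_of_lt ht) (by ring)

lemma intrinsicInterior_convex {n : ℕ} {P : Set (Vec n)} (hP : Convex ℝ P) :
    Convex ℝ (intrinsicInterior ℝ P) := by
  intro x hx y hy a b ha hb hab
  rcases eq_or_lt_of_le hb with hb0 | hb0
  · have ha1 : a = 1 := by linarith
    have hxy : a • x + b • y = x := by
      rw [← hb0, ha1]; simp
    rw [hxy]; exact hx
  · have hxP : x ∈ P := intrinsicInterior_subset hx
    have : a • x + b • y = x + b • (y - x) := by
      have : a = 1 - b := by linarith
      rw [this]; module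
    rw [this]
    exact combo_mem_intrinsicInterior hP hxP hy hb0 (by linarith)

/-- the point reflection as an affine isometry equiv -/
def reflIso {n : ℕ} (z : Vec n) : Vec n ≃ᵃⁱ[ℝ] Vec n :=
  AffineIsometryEquiv.pointReflection ℝ z

lemma reflIso_apply {n : ℕ} (z x : Vec n) : reflIso z x = (2:ℝ) • z - x := by
  have : reflIso z x = z - x + z := AffineIsometryEquiv.pointReflection_apply (𝕜 := ℝ) z x
  rw [this, two_smul]
  abel

lemma reflP_eq_image {n : ℕ} (z : Vec n) (P : Set (Vec n)) :
    reflP z P = (reflIso z) '' P := by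
  unfold reflP
  apply Set.image_congr
  intro x _
  rw [reflIso_apply]

lemma mem_reflP {n : ℕ} {z x : Vec n} {P : Set (Vec n)} :
    x ∈ reflP z P ↔ (2:ℝ) • z - x ∈ P := by
  constructor
  · rintro ⟨p, hp, rfl⟩
    have : (2:ℝ) • z - ((2:ℝ) • z - p) = p := by module
    rwa [this]
  · intro h
    exact ⟨(2:ℝ) • z - x, h, by module⟩

lemma reflP_intrinsicInterior {n : ℕ} (z : Vec n) (E : Set (Vec n)) {e : Vec n}
    (he : e ∈ intrinsicInterior ℝ E) :
    (2:ℝ) • z - e ∈ intrinsicInterior ℝ (reflP z E) := by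
  rw [reflP_eq_image]
  have h2 : intrinsicInterior ℝ ((reflIso z).toAffineIsometry '' E)
      = (reflIso z).toAffineIsometry '' intrinsicInterior ℝ E :=
    AffineIsometry.image_intrinsicInterior _ E
  have hco : ((reflIso z).toAffineIsometry : Vec n → Vec n) = ⇑(reflIso z) := rfl
  rw [hco] at h2
  rw [h2]
  exact ⟨e, he, (reflIso_apply z e).symm ▸ rfl⟩



/-! ### faces as argmax sets -/

def argmaxSet {n : ℕ} (c : Vec n) (P : Set (Vec n)) : Set (Vec n) :=
  {x ∈ P | ∀ y ∈ P, dot c y ≤ dot c x}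

lemma isFace_iff {n : ℕ} (P F : Set (Vec n)) : IsFace P F ↔ ∃ c, F = argmaxSet c P :=
  Iff.rfl

lemma argmaxSet_subset {n : ℕ} (c : Vec n) (P : Set (Vec n)) : argmaxSet c P ⊆ P :=
  fun _ h => h.1

lemma argmaxSet_zero {n : ℕ} (P : Set (Vec n)) : argmaxSet (0 : Vec n) P = P := by
  ext x
  simp [argmaxSet, dot_zero_left]

lemma argmaxSet_convex {n : ℕ} {P : Set (Vec n)} (hP : Convex ℝ P) (c : Vec n) :
    Convex ℝ (argmaxSet c P) := by
  rintro x ⟨hxP, hx⟩ y ⟨hyP, hy⟩ a b ha hb hab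
  refine ⟨hP hxP hyP ha hb hab, fun u hu => ?_⟩
  have : dot c (a • x + b • y) = a * dot c x + b * dot c y := by
    rw [dot_add_right, dot_smul_right, dot_smul_right]
  rw [this]
  calc dot c u = a * dot c u + b * dot c u := by rw [← add_mul, hab, one_mul]
    _ ≤ a * dot c x + b * dot c y := by
        have := hx u hu; have := hy u hu; nlinarith

lemma dot_eq_on_argmax {n : ℕ} {c : Vec n} {P : Set (Vec n)} {x y : Vec n}
    (hx : x ∈ argmaxSet c P) (hy : y ∈ argmaxSet c P) : dot c x = dot c y :=
  le_antisymm (hy.2 x hx.1) (hx.2 y hy.1)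

/-- bound for a linear functional over a convex hull -/
lemma hull_bound {n : ℕ} {S : Finset (Vec n)} {c : Vec n} {M : ℝ}
    (hle : ∀ s ∈ S, dot c s ≤ M) : ∀ x ∈ convexHull ℝ (S : Set (Vec n)), dot c x ≤ M := by
  intro x hx
  have hconv : Convex ℝ {w : Vec n | dot c w ≤ M} :=
    convex_halfSpace_le (⟨fun a b => dot_add_right c a b, fun t a => dot_smul_right c t a⟩ :
      IsLinearMap ℝ (fun w => dot c w)) M
  have : convexHull ℝ (S : Set (Vec n)) ⊆ {w : Vec n | dot c w ≤ M} :=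
    convexHull_min (fun s hs => hle s hs) hconv
  exact this hx

/-- The key elementary computation: `G ∩ ρ_z F` is the argmax of `b - a` on `P ∩ ρ_z P`. -/
lemma face_inter_refl {n : ℕ} {P : Set (Vec n)} {a b f g z : Vec n}
    (hf : f ∈ argmaxSet a P) (hg : g ∈ argmaxSet b P) (hz : f + g = (2:ℝ) • z) :
    argmaxSet (b - a) (P ∩ reflP z P) = argmaxSet b P ∩ reflP z (argmaxSet a P) := by
  have hfr : (2:ℝ) • z - g = f := by rw [← hz]; abel
  have hgr : (2:ℝ) • z - f = g := by rw [← hz]; abel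
  have hgQ : g ∈ P ∩ reflP z P := ⟨hg.1, mem_reflP.2 (hfr ▸ hf.1)⟩
  have key : ∀ x ∈ P ∩ reflP z P,
      dot (b - a) x = dot b x + dot a ((2:ℝ) • z - x) - 2 * dot a z := by
    intro x _
    rw [dot_sub_left, dot_sub_right, dot_smul_right]
    ring
  have hvalg : dot (b - a) g = dot b g + dot a f - 2 * dot a z := by
    rw [key g hgQ, hfr]
  ext x
  constructor
  · rintro ⟨⟨hxP, hxR⟩, hmax⟩
    have hx2 : (2:ℝ) • z - x ∈ P := mem_reflP.1 hxR
    have h1 : dot b x ≤ dot b g := hg.2 x hxP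
    have h2 : dot a ((2:ℝ) • z - x) ≤ dot a f := hf.2 _ hx2
    have h3 : dot (b - a) g ≤ dot (b - a) x := hmax g hgQ
    rw [hvalg, key x ⟨hxP, hxR⟩] at h3
    have hb' : dot b x = dot b g := by linarith
    have ha' : dot a ((2:ℝ) • z - x) = dot a f := by linarith
    refine ⟨⟨hxP, fun y hy => ?_⟩, mem_reflP.2 ⟨hx2, fun y hy => ?_⟩⟩
    · rw [hb']; exact hg.2 y hy
    · rw [ha']; exact hf.2 y hy
  · rintro ⟨hxG, hxRF⟩
    have hx2 : (2:ℝ) • z - x ∈ argmaxSet a P := mem_reflP.1 hxRF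
    have hxQ : x ∈ P ∩ reflP z P := ⟨hxG.1, mem_reflP.2 hx2.1⟩
    refine ⟨hxQ, fun y hy => ?_⟩
    have hy2 : (2:ℝ) • z - y ∈ P := mem_reflP.1 hy.2
    rw [key x hxQ, key y hy]
    have h1 : dot b y ≤ dot b x := hxG.2 y hy.1
    have h2 : dot a ((2:ℝ) • z - y) ≤ dot a ((2:ℝ) • z - x) := hx2.2 _ hy2
    linarith


/-- strict hull bound: if the functional is strictly below `M` off `U`, any hull point
attaining `M` lies in the hull of `S ∩ U`. -/
lemma hull_strict {n : ℕ} {S : Finset (Vec n)} {c : Vec n} {M : ℝ} {U : Set (Vec n)}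
    (hle : ∀ s ∈ S, dot c s ≤ M) (hstrict : ∀ s ∈ S, s ∉ U → dot c s < M)
    {y : Vec n} (hy : y ∈ convexHull ℝ (S : Set (Vec n))) (hge : M ≤ dot c y) :
    y ∈ convexHull ℝ ((S : Set (Vec n)) ∩ U) ∧ dot c y = M := by
  classical
  rw [Finset.convexHull_eq] at hy
  obtain ⟨w, hw0, hw1, hcm⟩ := hy
  have hysum : y = ∑ s ∈ S, w s • s := by
    rw [← hcm, Finset.centerMass_eq_of_sum_1 _ _ hw1]
    rfl
  have hdot : dot c y = ∑ s ∈ S, w s * dot c s := by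
    rw [hysum, ← dotL_apply, map_sum]
    exact Finset.sum_congr rfl fun s _ => by rw [dotL_apply, dot_smul_right]
  have hterm : ∀ s ∈ S, 0 ≤ w s * (M - dot c s) := by
    intro s hs
    have := hle s hs
    have := hw0 s hs
    nlinarith
  have hexp : ∑ s ∈ S, w s * (M - dot c s) = M - dot c y := by
    have h1 : ∑ s ∈ S, w s * (M - dot c s)
        = (∑ s ∈ S, w s) * M - ∑ s ∈ S, w s * dot c s := by
      rw [Finset.sum_mul]
      rw [← Finset.sum_sub_distrib]
      exact Finset.sum_congr rfl fun s _ => by ring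
    rw [h1, hw1, one_mul, hdot]
  have hsum0 : ∑ s ∈ S, w s * (M - dot c s) = 0 := by
    have h1 : ∑ s ∈ S, w s * (M - dot c s) ≤ 0 := by rw [hexp]; linarith
    exact le_antisymm h1 (Finset.sum_nonneg hterm)
  have hzero : ∀ s ∈ S, w s * (M - dot c s) = 0 :=
    (Finset.sum_eq_zero_iff_of_nonneg hterm).1 hsum0
  have hwU : ∀ s ∈ S, s ∉ U → w s = 0 := by
    intro s hs hsU
    have h1 := hstrict s hs hsU
    have h2 := hzero s hs
    have h3 := hw0 s hs
    rcases mul_eq_zero.1 h2 with h | h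
    · exact h
    · exfalso; nlinarith
  constructor
  · have hy' : y = (S.filter (fun s => w s ≠ 0)).centerMass w id := by
      rw [Finset.centerMass_filter_ne_zero, ← hcm]
    rw [hy']
    refine Finset.centerMass_mem_convexHull _ (fun i hi => hw0 i (Finset.mem_filter.1 hi).1) ?_ ?_
    · rw [Finset.sum_filter_ne_zero, hw1]; norm_num
    · intro i hi
      obtain ⟨hiS, hiw⟩ := Finset.mem_filter.1 hi
      refine ⟨hiS, ?_⟩
      by_contra hiU
      exact hiw (hwU i hiS hiU)
  · rw [hexp] at hsum0
    linarith

/-- a face of the hull of `S` is the hull of the points of `S` in it -/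
lemma face_hull {n : ℕ} {S : Finset (Vec n)} {b g : Vec n}
    (hg : g ∈ argmaxSet b (convexHull ℝ (S : Set (Vec n)))) :
    argmaxSet b (convexHull ℝ (S : Set (Vec n)))
      = convexHull ℝ ((S : Set (Vec n)) ∩ argmaxSet b (convexHull ℝ (S : Set (Vec n)))) := by
  set P := convexHull ℝ (S : Set (Vec n)) with hPdef
  set G := argmaxSet b P with hGdef
  set M := dot b g with hM
  have hmax : ∀ y ∈ P, dot b y ≤ M := fun y hy => hg.2 y hy
  have hle : ∀ s ∈ S, dot b s ≤ M := fun s hs => hmax s (subset_convexHull ℝ _ hs)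
  have hstrict : ∀ s ∈ S, s ∉ G → dot b s < M := by
    intro s hs hsG
    rcases lt_or_eq_of_le (hle s hs) with h | h
    · exact h
    · exfalso
      exact hsG ⟨subset_convexHull ℝ _ hs, fun y hy => by rw [h]; exact hmax y hy⟩
  apply Set.Subset.antisymm
  · intro x hx
    have hxM : dot b x = M := dot_eq_on_argmax hx hg
    exact (hull_strict hle hstrict hx.1 (le_of_eq hxM.symm)).1
  · exact convexHull_min Set.inter_subset_right
      (argmaxSet_convex (convex_convexHull ℝ _) b)

/-- uniform small parameter for perturbation arguments -/
lemma exists_perturb {n : ℕ} {S : Finset (Vec n)} (hS : S.Nonempty) (p q : Vec n → ℝ) :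
    ∃ t : ℝ, 0 < t ∧ ∀ s ∈ S, 0 < p s → t * q s < p s := by
  classical
  set f : Vec n → ℝ := fun s => if 0 < p s then p s / (|q s| + 1) else 1 with hf
  refine ⟨S.inf' hS f, ?_, ?_⟩
  · rw [Finset.lt_inf'_iff]
    intro s _
    rw [hf]
    dsimp only
    split_ifs with h
    · positivity
    · norm_num
  · intro s hs hps
    have hle : S.inf' hS f ≤ f s := Finset.inf'_le f hs
    have hfs : f s = p s / (|q s| + 1) := by rw [hf]; simp [hps]
    have ht0 : 0 < S.inf' hS f := by
      rw [Finset.lt_inf'_iff]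
      intro u _
      rw [hf]; dsimp only
      split_ifs with h
      · positivity
      · norm_num
    have habs : |q s| + 1 > 0 := by positivity
    calc S.inf' hS f * q s ≤ S.inf' hS f * |q s| :=
          mul_le_mul_of_nonneg_left (le_abs_self _) (le_of_lt ht0)
      _ ≤ (p s / (|q s| + 1)) * |q s| := by
          apply mul_le_mul_of_nonneg_right _ (abs_nonneg _)
          rw [← hfs]; exact hle
      _ < p s := by
          rw [div_mul_eq_mul_div, div_lt_iff₀ habs]
          nlinarith [abs_nonneg (q s)]


/-- duality: the span of the normal cone of a face is the perp of its direction -/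
lemma span_normalCone {n : ℕ} {S : Finset (Vec n)} {P : Set (Vec n)}
    (hP : P = convexHull ℝ (S : Set (Vec n))) {b g : Vec n}
    (hg : g ∈ argmaxSet b P) :
    Submodule.span ℝ (normalCone P (argmaxSet b P)) = perp (vectorSpan ℝ (argmaxSet b P)) := by
  set G := argmaxSet b P with hGdef
  have hGsub : ∀ c, c ∈ normalCone P G ↔ G ⊆ argmaxSet c P := fun c => Iff.rfl
  apply le_antisymm
  · rw [Submodule.span_le]
    intro c hc
    rw [SetLike.mem_coe, mem_perp]
    intro u hu
    rw [vectorSpan_def] at hu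
    have hK : vectorSpan ℝ G ≤ LinearMap.ker (dotL c) := by
      rw [vectorSpan_def, Submodule.span_le]
      rintro v hv
      obtain ⟨x, hx, y, hy, rfl⟩ := Set.mem_vsub.1 hv
      rw [SetLike.mem_coe, LinearMap.mem_ker, dotL_apply]
      have hxc : x ∈ argmaxSet c P := hc hx
      have hyc : y ∈ argmaxSet c P := hc hy
      have : dot c x = dot c y := dot_eq_on_argmax hxc hyc
      rw [show x -ᵥ y = x - y from rfl, dot_sub_right, this, sub_self]
    have := hK ((vectorSpan_def ℝ G) ▸ hu)
    rw [LinearMap.mem_ker, dotL_apply] at this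
    rw [dot_comm]; exact this
  · intro e he
    rw [mem_perp] at he
    have hgP : g ∈ P := hg.1
    have hSne : S.Nonempty := by
      by_contra h
      rw [Finset.not_nonempty_iff_eq_empty] at h
      rw [h] at hP
      simp only [Finset.coe_empty, convexHull_empty] at hP
      rw [hP] at hgP
      exact hgP
    set M := dot b g with hM
    have hmax : ∀ y ∈ P, dot b y ≤ M := fun y hy => hg.2 y hy
    have hdotG : ∀ x ∈ G, dot b x = M ∧ dot e x = dot e g := by
      intro x hx
      constructor
      · exact dot_eq_on_argmax hx hg
      · have hu : x -ᵥ g ∈ vectorSpan ℝ G := vsub_mem_vectorSpan ℝ hx hg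
        have := he _ hu
        rw [show x -ᵥ g = x - g from rfl, dot_comm, dot_sub_right] at this
        linarith [this]
    obtain ⟨t, ht0, ht⟩ := exists_perturb hSne (fun s => M - dot b s)
      (fun s => dot e s - dot e g)
    set ct := b + t • e with hct
    have hctval : ∀ x, dot ct x = dot b x + t * dot e x := by
      intro x
      rw [hct, dot_add_left, dot_smul_left]
    have hcmem : ct ∈ normalCone P G := by
      intro x hx
      obtain ⟨hbx, hex⟩ := hdotG x hx
      have hxval : dot ct x = M + t * dot e g := by rw [hctval, hbx, hex]
      refine ⟨hx.1, fun y hy => ?_⟩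
      rw [hxval]
      refine hull_bound (c := ct) (M := M + t * dot e g) ?_ y (hP ▸ hy)
      intro s hs
      have hsP : s ∈ P := by rw [hP]; exact subset_convexHull ℝ _ hs
      rcases eq_or_lt_of_le (hmax s hsP) with hseq | hslt
      · have hsG : s ∈ G := ⟨hsP, fun y' hy' => by rw [hseq]; exact hmax y' hy'⟩
        obtain ⟨_, hes⟩ := hdotG s hsG
        rw [hctval, hseq, hes]
      · have := ht s hs (by linarith)
        rw [hctval]
        linarith
    have hbmem : b ∈ normalCone P G := fun x hx => hx
    have hspan : ct - b ∈ Submodule.span ℝ (normalCone P G) :=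
      Submodule.sub_mem _ (Submodule.subset_span hcmem) (Submodule.subset_span hbmem)
    have hetb : e = t⁻¹ • (ct - b) := by
      rw [hct]
      rw [add_sub_cancel_left, smul_smul, inv_mul_cancel₀ (ne_of_gt ht0), one_smul]
    rw [hetb]
    exact Submodule.smul_mem _ _ hspan


/-- a face of a face is a face -/
lemma face_of_face {n : ℕ} {S : Finset (Vec n)} {P : Set (Vec n)}
    (hP : P = convexHull ℝ (S : Set (Vec n))) {b g : Vec n}
    (hg : g ∈ argmaxSet b P) (b' : Vec n) :
    ∃ c : Vec n, argmaxSet b' (argmaxSet b P) = argmaxSet c P := by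
  classical
  set G := argmaxSet b P with hGdef
  have hPconv : Convex ℝ P := hP ▸ convex_convexHull ℝ _
  have hGconv : Convex ℝ G := argmaxSet_convex hPconv b
  have hUconv : Convex ℝ (argmaxSet b' G) := argmaxSet_convex hGconv b'
  have hface : G = convexHull ℝ ((S : Set (Vec n)) ∩ G) := by
    rw [hGdef, hP]
    have hg' : g ∈ argmaxSet b (convexHull ℝ (S : Set (Vec n))) := by rw [← hP]; exact hg
    exact face_hull hg'
  set T := S.filter (fun s => s ∈ G) with hT
  have hTcoe : (T : Set (Vec n)) = (S : Set (Vec n)) ∩ G := by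
    rw [hT]; ext x; simp [Finset.mem_filter, Set.mem_inter_iff]
  have hGT : G = convexHull ℝ (T : Set (Vec n)) := by rw [hTcoe]; exact hface
  have hTne : T.Nonempty := by
    by_contra h
    rw [Finset.not_nonempty_iff_eq_empty] at h
    rw [h] at hGT
    simp only [Finset.coe_empty, convexHull_empty] at hGT
    exact (hGT ▸ hg : g ∈ (∅ : Set (Vec n)))
  obtain ⟨x₀, hx₀T, hx₀m⟩ := T.exists_max_image (fun s => dot b' s) hTne
  have hx₀G : x₀ ∈ G := (Finset.mem_filter.1 hx₀T).2
  have hx₀max : x₀ ∈ argmaxSet b' G := by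
    refine ⟨hx₀G, fun u hu => ?_⟩
    have : u ∈ convexHull ℝ (T : Set (Vec n)) := hGT ▸ hu
    exact hull_bound (fun s hs => hx₀m s hs) u this
  set M := dot b g with hM
  have hmax : ∀ y ∈ P, dot b y ≤ M := fun y hy => hg.2 y hy
  have hdotGM : ∀ x ∈ G, dot b x = M := fun x hx => dot_eq_on_argmax hx hg
  have hSne : S.Nonempty := by
    obtain ⟨u, hu⟩ := hTne
    exact ⟨u, (Finset.mem_filter.1 hu).1⟩
  obtain ⟨t, ht0, ht⟩ := exists_perturb hSne (fun s => M - dot b s)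
    (fun s => dot b' s - dot b' x₀)
  set c := b + t • b' with hc
  have hcval : ∀ x, dot c x = dot b x + t * dot b' x := fun x => by
    rw [hc, dot_add_left, dot_smul_left]
  have hGmem : ∀ s, s ∈ S → dot b s = M → s ∈ G := by
    intro s hs hseq
    exact ⟨hP ▸ subset_convexHull ℝ _ hs, fun y' hy' => by rw [hseq]; exact hmax y' hy'⟩
  have claimA : argmaxSet b' G ⊆ argmaxSet c P := by
    rintro x ⟨hxG, hxm⟩
    refine ⟨hxG.1, fun y hy => ?_⟩
    have hxval : dot c x = M + t * dot b' x := by rw [hcval, hdotGM x hxG]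
    rw [hxval]
    refine hull_bound ?_ y (hP ▸ hy)
    intro s hs
    have hsP : s ∈ P := hP ▸ subset_convexHull ℝ _ hs
    rcases eq_or_lt_of_le (hmax s hsP) with hseq | hslt
    · have hsG : s ∈ G := hGmem s hs hseq
      have : dot b' s ≤ dot b' x := hxm s hsG
      rw [hcval, hseq]
      nlinarith
    · have hq := ht s hs (by linarith)
      have hbx : dot b' x₀ ≤ dot b' x := hxm x₀ hx₀G
      rw [hcval]
      nlinarith
  have hx₀c : x₀ ∈ argmaxSet c P := claimA hx₀max
  have claimB : argmaxSet c P ⊆ argmaxSet b' G := by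
    intro y hy
    have hyval : dot c y = dot c x₀ := dot_eq_on_argmax hy hx₀c
    have hx₀val : dot c x₀ = M + t * dot b' x₀ := by rw [hcval, hdotGM x₀ hx₀G]
    have hle : ∀ s ∈ S, dot c s ≤ M + t * dot b' x₀ := by
      intro s hs
      have hsP : s ∈ P := hP ▸ subset_convexHull ℝ _ hs
      rcases eq_or_lt_of_le (hmax s hsP) with hseq | hslt
      · have hsG : s ∈ G := hGmem s hs hseq
        have : dot b' s ≤ dot b' x₀ := hx₀max.2 s hsG
        rw [hcval, hseq]
        nlinarith
      · have hq := ht s hs (by linarith)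
        rw [hcval]
        nlinarith
    have hstrict : ∀ s ∈ S, s ∉ argmaxSet b' G → dot c s < M + t * dot b' x₀ := by
      intro s hs hsU
      have hsP : s ∈ P := hP ▸ subset_convexHull ℝ _ hs
      rcases eq_or_lt_of_le (hmax s hsP) with hseq | hslt
      · have hsG : s ∈ G := hGmem s hs hseq
        have hsle : dot b' s ≤ dot b' x₀ := hx₀max.2 s hsG
        rcases eq_or_lt_of_le hsle with hseq2 | hslt2
        · exfalso
          exact hsU ⟨hsG, fun u hu => by rw [hseq2]; exact hx₀max.2 u hu⟩
        · rw [hcval, hseq]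
          nlinarith
      · have hq := ht s hs (by linarith)
        rw [hcval]
        nlinarith
    have := hull_strict hle hstrict (hP ▸ hy.1) (by rw [← hx₀val, ← hyval])
    have hyU : y ∈ convexHull ℝ ((S : Set (Vec n)) ∩ argmaxSet b' G) := this.1
    exact convexHull_min Set.inter_subset_right hUconv hyU
  exact ⟨c, Set.Subset.antisymm claimA claimB⟩


lemma dot_single_rep {n : ℕ} (φ : Vec n →L[ℝ] ℝ) (x : Vec n) :
    dot (fun i => φ (Pi.single i 1)) x = φ x := by
  have hx : x = ∑ i, x i • (Pi.single i 1 : Vec n) := by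
    funext j
    rw [Finset.sum_apply]
    have : ∀ i ∈ Finset.univ, (x i • (Pi.single i 1 : Vec n)) j
        = if j = i then x j else 0 := by
      intro i _
      by_cases h : j = i
      · subst h; simp
      · simp [Pi.single_apply, Ne.symm h, h]
    rw [Finset.sum_congr rfl this, Finset.sum_ite_eq]
    simp
  conv_rhs => rw [hx]
  rw [map_sum]
  unfold dot
  refine Finset.sum_congr rfl fun i _ => ?_
  rw [map_smul]
  simp [mul_comm]

/-- a point of a polytope which is not in the relative interior lies on a proper face -/
lemma exists_proper_face {n : ℕ} {S : Finset (Vec n)} {P : Set (Vec n)}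
    (hP : P = convexHull ℝ (S : Set (Vec n))) {e : Vec n} (he : e ∈ P)
    (hne : e ∉ intrinsicInterior ℝ P) :
    ∃ b y₀, e ∈ argmaxSet b P ∧ y₀ ∈ P ∧ y₀ ∉ argmaxSet b P := by
  have hPconv : Convex ℝ P := hP ▸ convex_convexHull ℝ _
  obtain ⟨y₀, hy₀⟩ := Set.Nonempty.intrinsicInterior hPconv ⟨e, he⟩
  set A := affineSpan ℝ P with hA
  set V := A.direction with hV
  obtain ⟨W, hW⟩ := Submodule.exists_isCompl V
  set proj : Vec n →ₗ[ℝ] Vec n := V.subtype.comp (V.projectionOnto W hW) with hproj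
  have hprojV : ∀ x, proj x ∈ V := fun x => (V.projectionOnto W hW x).2
  have hprojid : ∀ v ∈ V, proj v = v := by
    intro v hv
    rw [hproj]
    simp only [LinearMap.comp_apply]
    rw [Submodule.projectionOnto_apply_left hW ⟨v, hv⟩]
    rfl
  have heA : e ∈ A := subset_affineSpan ℝ P he
  set π : Vec n → Vec n := fun x => e + proj (x - e) with hπ
  have hπA : ∀ x, π x ∈ A := by
    intro x
    have := AffineSubspace.vadd_mem_of_mem_direction (hprojV (x - e)) heA
    simpa [hπ, vadd_eq_add, add_comm] using this
  have hπid : ∀ x ∈ A, π x = x := by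
    intro x hx
    have hxe : x - e ∈ V := AffineSubspace.vsub_mem_direction hx heA
    rw [hπ]
    simp only
    rw [hprojid _ hxe]
    abel
  have hπcont : Continuous π := by
    have h1 : Continuous proj := proj.continuous_of_finiteDimensional
    exact continuous_const.add (h1.comp (continuous_id.sub continuous_const))
  set g : Vec n → A := fun x => ⟨π x, hπA x⟩ with hg
  have hgcont : Continuous g := hπcont.subtype_mk _
  set O := {x : Vec n | π x ∈ intrinsicInterior ℝ P} with hO
  have hOiff : ∀ x, x ∈ O ↔ g x ∈ interior (((↑) : A → Vec n) ⁻¹' P) := by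
    intro x
    constructor
    · rintro ⟨y, hy, hyx⟩
      have : g x = y := Subtype.ext (by rw [hyx])
      rw [this]; exact hy
    · intro h
      exact ⟨g x, h, rfl⟩
  have hOopen : IsOpen O := by
    have : O = g ⁻¹' (interior (((↑) : A → Vec n) ⁻¹' P)) := Set.ext hOiff
    rw [this]
    exact isOpen_interior.preimage hgcont
  have hπaffine : ∀ (b : ℝ) (x y : Vec n),
      π (x + b • (y - x)) = π x + b • (π y - π x) := by
    intro b x y
    simp only [hπ, map_add, map_sub, map_smul]
    module
  have hOconv : Convex ℝ O := by
    rintro x hx y hy a b ha hb hab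
    have ha1 : a = 1 - b := by linarith
    have h3 : a • x + b • y = x + b • (y - x) := by rw [ha1]; module
    show π (a • x + b • y) ∈ intrinsicInterior ℝ P
    rw [h3, hπaffine b x y]
    have h5 : π x + b • (π y - π x) = a • π x + b • π y := by rw [ha1]; module
    rw [h5]
    exact intrinsicInterior_convex hPconv hx hy ha hb hab
  have heO : e ∉ O := by
    intro h
    rw [hO, Set.mem_setOf_eq, hπid e heA] at h
    exact hne h
  obtain ⟨φ, hφ⟩ := geometric_hahn_banach_open_point hOconv hOopen heO
  set b : Vec n := fun i => φ (Pi.single i 1) with hb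
  have hrep : ∀ x, dot b x = φ x := fun x => dot_single_rep φ x
  have hy₀P : y₀ ∈ P := intrinsicInterior_subset hy₀
  have hy₀O : y₀ ∈ O := by
    rw [hO, Set.mem_setOf_eq, hπid y₀ (subset_affineSpan ℝ P hy₀P)]
    exact hy₀
  have hmax : e ∈ argmaxSet b P := by
    refine ⟨he, fun y hy => ?_⟩
    rw [hrep, hrep]
    by_contra hcon
    push_neg at hcon
    set Δ := φ y₀ - φ y with hΔ
    set t := min 1 ((φ y - φ e) / (2 * (|Δ| + 1))) with ht
    have hgap : 0 < φ y - φ e := by linarith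
    have ht0 : 0 < t := lt_min one_pos (by positivity)
    have ht1 : t ≤ 1 := min_le_left _ _
    have htle : t ≤ (φ y - φ e) / (2 * (|Δ| + 1)) := min_le_right _ _
    have hyt : y + t • (y₀ - y) ∈ intrinsicInterior ℝ P :=
      combo_mem_intrinsicInterior hPconv hy hy₀ ht0 ht1
    have hytO : y + t • (y₀ - y) ∈ O := by
      rw [hO, Set.mem_setOf_eq,
        hπid _ (subset_affineSpan ℝ P (intrinsicInterior_subset hyt))]
      exact hyt
    have hlt := hφ _ hytO
    have hφyt : φ (y + t • (y₀ - y)) = φ y + t * Δ := by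
      rw [map_add, map_smul, map_sub, smul_eq_mul, hΔ]
    rw [hφyt] at hlt
    have habs : -|Δ| ≤ Δ := neg_abs_le Δ
    have h2 : t * Δ ≥ -(t * |Δ|) := by nlinarith [abs_nonneg Δ]
    have h3 : t * |Δ| ≤ ((φ y - φ e) / (2 * (|Δ| + 1))) * (|Δ| + 1) := by
      have : t * |Δ| ≤ t * (|Δ| + 1) := by nlinarith
      have h4 : t * (|Δ| + 1) ≤ ((φ y - φ e) / (2 * (|Δ| + 1))) * (|Δ| + 1) := by
        apply mul_le_mul_of_nonneg_right htle (by positivity)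
      linarith
    have h5 : ((φ y - φ e) / (2 * (|Δ| + 1))) * (|Δ| + 1) = (φ y - φ e) / 2 := by
      field_simp
    nlinarith
  refine ⟨b, y₀, hmax, hy₀P, ?_⟩
  intro hcon
  have h1 : dot b e ≤ dot b y₀ := hcon.2 e he
  have h2 : φ y₀ < φ e := hφ y₀ hy₀O
  rw [hrep, hrep] at h1
  linarith


/-- every point of a polytope is in the relative interior of some face -/
lemma exists_relint_face_aux {n : ℕ} :
    ∀ (k : ℕ) (S : Finset (Vec n)), S.card ≤ k → ∀ e ∈ convexHull ℝ (S : Set (Vec n)),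
      ∃ b, e ∈ intrinsicInterior ℝ (argmaxSet b (convexHull ℝ (S : Set (Vec n)))) := by
  intro k
  induction k with
  | zero =>
    intro S hcard e he
    rw [Finset.card_eq_zero.1 (Nat.le_zero.1 hcard)] at he
    simp only [Finset.coe_empty, convexHull_empty] at he
    exact absurd he (Set.notMem_empty e)
  | succ k ih =>
    intro S hcard e he
    classical
    by_cases h : e ∈ intrinsicInterior ℝ (convexHull ℝ (S : Set (Vec n)))
    · exact ⟨0, by rw [argmaxSet_zero]; exact h⟩
    · obtain ⟨b, y₀, hmax, hy₀P, hy₀n⟩ := exists_proper_face rfl he h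
      set P := convexHull ℝ (S : Set (Vec n)) with hPdef
      set G := argmaxSet b P with hGdef
      set T := S.filter (fun s => s ∈ G) with hT
      have hTcoe : (T : Set (Vec n)) = (S : Set (Vec n)) ∩ G := by
        rw [hT]; ext x; simp [Finset.mem_filter, Set.mem_inter_iff]
      have hGT : G = convexHull ℝ (T : Set (Vec n)) := by
        rw [hTcoe, hGdef, hPdef]
        exact face_hull hmax
      have hTS : T ⊆ S := Finset.filter_subset _ _
      have hTne2 : T ≠ S := by
        intro hTeq
        apply hy₀n
        rw [hGdef] at hGT ⊢
        rw [hTeq] at hGT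
        rw [hGT]
        exact hy₀P
      have hTcard : T.card ≤ k := by
        have := Finset.card_lt_card (Finset.ssubset_iff_subset_ne.2 ⟨hTS, hTne2⟩)
        omega
      have heG : e ∈ G := hmax
      have heT : e ∈ convexHull ℝ (T : Set (Vec n)) := hGT ▸ heG
      obtain ⟨b', hb'⟩ := ih T hTcard e heT
      obtain ⟨c, hc⟩ := face_of_face (hPdef : P = convexHull ℝ (S : Set (Vec n))) hmax b'
      refine ⟨c, ?_⟩
      rw [← hc]
      have : argmaxSet b' (convexHull ℝ (T : Set (Vec n))) = argmaxSet b' G := by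
        rw [← hGT]
      rw [← this]
      exact hb'

lemma exists_relint_face {n : ℕ} {S : Finset (Vec n)} {P : Set (Vec n)}
    (hP : P = convexHull ℝ (S : Set (Vec n))) {e : Vec n} (he : e ∈ P) :
    ∃ b, e ∈ intrinsicInterior ℝ (argmaxSet b P) := by
  subst hP
  exact exists_relint_face_aux S.card S le_rfl e he


/-- a face containing a relative interior point of a subset contains the subset -/
lemma face_contains {n : ℕ} {P C : Set (Vec n)} {c' e : Vec n} (hC : C ⊆ P)
    (he : e ∈ intrinsicInterior ℝ C) (hface : e ∈ argmaxSet c' P) :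
    C ⊆ argmaxSet c' P := by
  intro x hx
  have heC : e ∈ C := intrinsicInterior_subset he
  have hd : x - e ∈ vectorSpan ℝ C := vsub_mem_vectorSpan ℝ hx heC
  obtain ⟨ε, hε, hmove⟩ := relint_move he hd
  have h1 : e + (-ε) • (x - e) ∈ C := hmove (-ε) (by rw [abs_neg, abs_of_pos hε])
  have h2 : dot c' (e + (-ε) • (x - e)) ≤ dot c' e := hface.2 _ (hC h1)
  rw [dot_add_right, dot_smul_right] at h2
  have h3 : 0 ≤ dot c' (x - e) := by nlinarith
  have h4 : dot c' x ≤ dot c' e := hface.2 x (hC hx)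
  have h5 : dot c' x = dot c' e + dot c' (x - e) := by
    rw [← dot_add_right]
    congr 1
    abel
  have h6 : dot c' x = dot c' e := by linarith
  exact ⟨hC hx, fun y hy => h6 ▸ hface.2 y hy⟩

/-- a linear functional constant on a set is constant on its affine span -/
lemma dot_const_on_affineSpan {n : ℕ} {E : Set (Vec n)} {c : Vec n} {m : ℝ}
    (h : ∀ x ∈ E, dot c x = m) {e₀ : Vec n} (he₀ : e₀ ∈ E) :
    ∀ x ∈ affineSpan ℝ E, dot c x = m := by
  intro x hx
  have hd : x - e₀ ∈ vectorSpan ℝ E := by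
    rw [← direction_affineSpan]
    exact AffineSubspace.vsub_mem_direction hx (subset_affineSpan ℝ E he₀)
  have hker : vectorSpan ℝ E ≤ LinearMap.ker (dotL c) := by
    rw [vectorSpan_def, Submodule.span_le]
    rintro v hv
    obtain ⟨a, ha, b, hb, rfl⟩ := Set.mem_vsub.1 hv
    rw [SetLike.mem_coe, LinearMap.mem_ker, dotL_apply,
      show a -ᵥ b = a - b from rfl, dot_sub_right, h a ha, h b hb, sub_self]
  have := hker hd
  rw [LinearMap.mem_ker, dotL_apply, dot_sub_right, h e₀ he₀] at this
  linarith

lemma span_coneOf {n : ℕ} (X : Set (Vec n)) :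
    Submodule.span ℝ (coneOf X) = Submodule.span ℝ X := by
  apply le_antisymm
  · rw [Submodule.span_le]
    rintro v ⟨k, x, l, hx, hl, rfl⟩
    exact Submodule.sum_mem _ fun i _ =>
      Submodule.smul_mem _ _ (Submodule.subset_span (hx i))
  · apply Submodule.span_mono
    intro x hx
    exact ⟨1, fun _ => x, fun _ => 1, fun _ => hx, fun _ => zero_le_one, by simp⟩

lemma span_neg_image {n : ℕ} (X : Set (Vec n)) :
    Submodule.span ℝ (Neg.neg '' X) = Submodule.span ℝ X := by
  apply le_antisymm
  · rw [Submodule.span_le]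
    rintro v ⟨u, hu, rfl⟩
    exact Submodule.neg_mem _ (Submodule.subset_span hu)
  · rw [Submodule.span_le]
    intro u hu
    have : u = -(-u) := by abel
    rw [this]
    exact Submodule.neg_mem _ (Submodule.subset_span ⟨u, hu, rfl⟩)

lemma span_coneOf_union {n : ℕ} (NF NG : Set (Vec n)) :
    Submodule.span ℝ (coneOf ((Neg.neg '' NF) ∪ NG))
      = Submodule.span ℝ NF ⊔ Submodule.span ℝ NG := by
  rw [span_coneOf, Submodule.span_union, span_neg_image]


lemma vectorSpan_inter_refl {n : ℕ} (z : Vec n) (F G : Set (Vec n)) :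
    vectorSpan ℝ (G ∩ reflP z F) ≤ vectorSpan ℝ F ⊓ vectorSpan ℝ G := by
  rw [vectorSpan_def, Submodule.span_le]
  rintro v hv
  obtain ⟨x, hx, y, hy, rfl⟩ := Set.mem_vsub.1 hv
  rw [SetLike.mem_coe, Submodule.mem_inf]
  constructor
  · have hxF : (2:ℝ) • z - x ∈ F := mem_reflP.1 hx.2
    have hyF : (2:ℝ) • z - y ∈ F := mem_reflP.1 hy.2
    have := vsub_mem_vectorSpan ℝ hyF hxF
    have heq : x -ᵥ y = ((2:ℝ) • z - y) -ᵥ ((2:ℝ) • z - x) := by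
      show x - y = ((2:ℝ) • z - y) - ((2:ℝ) • z - x)
      abel
    rw [heq]
    exact this
  · exact vsub_mem_vectorSpan ℝ hx.1 hy.1

lemma reflP_convex {n : ℕ} (z : Vec n) {P : Set (Vec n)} (hP : Convex ℝ P) :
    Convex ℝ (reflP z P) := by
  intro x hx y hy a b ha hb hab
  have hx' := mem_reflP.1 hx
  have hy' := mem_reflP.1 hy
  rw [mem_reflP]
  have ha1 : a = 1 - b := by linarith
  have key : (2:ℝ) • z - (a • x + b • y)
      = a • ((2:ℝ) • z - x) + b • ((2:ℝ) • z - y) := by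
    rw [ha1]; module
  rw [key]
  exact hP hx' hy' ha hb hab

lemma sdim_vectorSpan {n : ℕ} (E : Set (Vec n)) :
    sdim E = Module.finrank ℝ (vectorSpan ℝ E) := by
  rw [sdim, direction_affineSpan]

/-- There is a surjection from the pairs of nonempty faces `(F, G)` of `P` with
`codim cone(-N_P(F) ∪ N_P(G)) = 1` onto the directions (up to nonzero scalar) of the edges of
`P ∩ ρ_z P` over all `z ∈ P`: each such pair determines an edge `G ∩ ρ_z F` of `P ∩ ρ_z P` for
any `z ∈ (relint F + relint G)/2`, and every edge of `P ∩ ρ_z P` arises in this way. -/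
theorem stmt7 {n : ℕ} (P : Set (Vec n)) (hP : IsPolytope P) :
    (∀ F G : Set (Vec n), IsFace P F → IsFace P G → F.Nonempty → G.Nonempty →
      Module.finrank ℝ (Submodule.span ℝ
          (coneOf ((Neg.neg '' normalCone P F) ∪ normalCone P G))) + 1 = n →
      ∀ z ∈ avgSet (intrinsicInterior ℝ F) (intrinsicInterior ℝ G),
        IsEdge (P ∩ reflP z P) (G ∩ reflP z F)) ∧
    (∀ z ∈ P, ∀ E : Set (Vec n), IsEdge (P ∩ reflP z P) E →
      ∃ F G : Set (Vec n), IsFace P F ∧ IsFace P G ∧ F.Nonempty ∧ G.Nonempty ∧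
        Module.finrank ℝ (Submodule.span ℝ
            (coneOf ((Neg.neg '' normalCone P F) ∪ normalCone P G))) + 1 = n ∧
        z ∈ avgSet (intrinsicInterior ℝ F) (intrinsicInterior ℝ G) ∧
        E = G ∩ reflP z F) := by
  obtain ⟨S, hS⟩ := hP
  constructor
  · -- Part 1
    intro F G hF hG hFne hGne hrank z hz
    obtain ⟨a, ha⟩ := hF
    obtain ⟨b, hb⟩ := hG
    have ha' : F = argmaxSet a P := ha
    have hb' : G = argmaxSet b P := hb
    obtain ⟨f, hf, g, hg, hzdef⟩ := hz
    have hfF : f ∈ F := intrinsicInterior_subset hf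
    have hgG : g ∈ G := intrinsicInterior_subset hg
    have hfa : f ∈ argmaxSet a P := ha' ▸ hfF
    have hgb : g ∈ argmaxSet b P := hb' ▸ hgG
    have hsum : f + g = (2:ℝ) • z := by
      rw [hzdef, smul_smul]
      norm_num
    have key : argmaxSet (b - a) (P ∩ reflP z P) = G ∩ reflP z F := by
      rw [face_inter_refl hfa hgb hsum, ← ha', ← hb']
    -- the span computation
    have hspan : Submodule.span ℝ (coneOf ((Neg.neg '' normalCone P F) ∪ normalCone P G))
        = perp (vectorSpan ℝ F ⊓ vectorSpan ℝ G) := by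
      rw [span_coneOf_union]
      rw [show normalCone P F = normalCone P (argmaxSet a P) from ha' ▸ rfl,
        show normalCone P G = normalCone P (argmaxSet b P) from hb' ▸ rfl,
        span_normalCone hS hfa, span_normalCone hS hgb, ← ha', ← hb', ← perp_inf]
    set U := vectorSpan ℝ F ⊓ vectorSpan ℝ G with hU
    have hUrank : Module.finrank ℝ U = 1 := by
      rw [hspan] at hrank
      have h1 := finrank_perp_add U
      generalize hA : Module.finrank ℝ ↥(perp U) = A at hrank h1
      generalize hB : Module.finrank ℝ ↥U = B at h1 ⊢
      omega
    have hUne : U ≠ ⊥ := by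
      intro hbot
      rw [hbot, finrank_bot] at hUrank
      exact zero_ne_one hUrank
    obtain ⟨d, hd, hd0⟩ := Submodule.exists_mem_ne_zero_of_ne_bot hUne
    have hdF : d ∈ vectorSpan ℝ F := (Submodule.mem_inf.1 hd).1
    have hdG : d ∈ vectorSpan ℝ G := (Submodule.mem_inf.1 hd).2
    obtain ⟨ε₁, hε₁, hm₁⟩ := relint_move hf hdF
    obtain ⟨ε₂, hε₂, hm₂⟩ := relint_move hg hdG
    set ε := min ε₁ ε₂ with hε
    have hε0 : 0 < ε := lt_min hε₁ hε₂
    have h2zg : (2:ℝ) • z - g = f := by rw [← hsum]; abel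
    have hgE : g ∈ G ∩ reflP z F := ⟨hgG, mem_reflP.2 (h2zg ▸ hfF)⟩
    have hgdE : g + ε • d ∈ G ∩ reflP z F := by
      constructor
      · exact hm₂ ε (by rw [abs_of_pos hε0]; exact min_le_right _ _)
      · rw [mem_reflP]
        have heq : (2:ℝ) • z - (g + ε • d) = f + (-ε) • d := by
          rw [← hsum]; module
        rw [heq]
        exact hm₁ (-ε) (by rw [abs_neg, abs_of_pos hε0]; exact min_le_left _ _)
    have hvsle : vectorSpan ℝ (G ∩ reflP z F) ≤ U := vectorSpan_inter_refl z F G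
    have hvsge : ε • d ∈ vectorSpan ℝ (G ∩ reflP z F) := by
      have := vsub_mem_vectorSpan ℝ hgdE hgE
      have heq : (g + ε • d) -ᵥ g = ε • d := by
        show (g + ε • d) - g = ε • d
        abel
      rwa [heq] at this
    have hεd0 : ε • d ≠ 0 := smul_ne_zero (ne_of_gt hε0) hd0
    have hvne : vectorSpan ℝ (G ∩ reflP z F) ≠ ⊥ := by
      intro hbot
      rw [hbot, Submodule.mem_bot] at hvsge
      exact hεd0 hvsge
    have hdim : sdim (G ∩ reflP z F) = 1 := by
      rw [sdim_vectorSpan]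
      have hle : Module.finrank ℝ (vectorSpan ℝ (G ∩ reflP z F)) ≤ 1 := by
        rw [← hUrank]
        exact Submodule.finrank_mono hvsle
      have hge : Module.finrank ℝ (vectorSpan ℝ (G ∩ reflP z F)) ≠ 0 := by
        intro h0
        exact hvne (Submodule.finrank_eq_zero.1 h0)
      omega
    exact ⟨⟨b - a, key.symm⟩, hdim⟩
  · -- Part 2
    intro z hzP E hE
    obtain ⟨hEface, hEdim⟩ := hE
    obtain ⟨c, hc⟩ := hEface
    have hc' : E = argmaxSet c (P ∩ reflP z P) := hc
    have hPconv : Convex ℝ P := hS ▸ convex_convexHull ℝ _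
    have hQconv : Convex ℝ (P ∩ reflP z P) := hPconv.inter (reflP_convex z hPconv)
    have hEconv : Convex ℝ E := hc' ▸ argmaxSet_convex hQconv c
    have hEne : E.Nonempty := by
      by_contra hne
      rw [Set.not_nonempty_iff_eq_empty] at hne
      rw [hne, sdim_vectorSpan] at hEdim
      rw [vectorSpan_empty, finrank_bot] at hEdim
      exact zero_ne_one hEdim
    obtain ⟨e, he⟩ := Set.Nonempty.intrinsicInterior hEconv hEne
    have heE : e ∈ E := intrinsicInterior_subset he
    have heQ : e ∈ P ∩ reflP z P := (hc' ▸ heE : e ∈ argmaxSet c (P ∩ reflP z P)).1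
    have heP : e ∈ P := heQ.1
    have hfP : (2:ℝ) • z - e ∈ P := mem_reflP.1 heQ.2
    obtain ⟨bG, hbG⟩ := exists_relint_face hS heP
    obtain ⟨bF, hbF⟩ := exists_relint_face hS hfP
    set G := argmaxSet bG P with hGdef
    set F := argmaxSet bF P with hFdef
    set f := (2:ℝ) • z - e with hfdef
    have hfF : f ∈ F := intrinsicInterior_subset hbF
    have heG : e ∈ G := intrinsicInterior_subset hbG
    have hEP : E ⊆ P := fun x hx => ((hc' ▸ hx : x ∈ argmaxSet c _).1).1
    -- E ⊆ G
    have hEG : E ⊆ G := face_contains hEP he heG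
    -- ρ_z E ⊆ F
    have hrEP : reflP z E ⊆ P := by
      rintro u ⟨x, hx, rfl⟩
      have : x ∈ reflP z P := ((hc' ▸ hx : x ∈ argmaxSet c _).1).2
      exact mem_reflP.1 this
    have hfrel : f ∈ intrinsicInterior ℝ (reflP z E) := reflP_intrinsicInterior z E he
    have hrEF : reflP z E ⊆ F := face_contains hrEP hfrel hfF
    have hErF : E ⊆ reflP z F := by
      intro x hx
      exact mem_reflP.2 (hrEF ⟨x, hx, rfl⟩)
    -- key: vectorSpan F ⊓ vectorSpan G ≤ vectorSpan E
    have hemax : e ∈ argmaxSet c (P ∩ reflP z P) := hc' ▸ heE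
    have hkey : vectorSpan ℝ F ⊓ vectorSpan ℝ G ≤ vectorSpan ℝ E := by
      intro d hd
      have hdF : d ∈ vectorSpan ℝ F := (Submodule.mem_inf.1 hd).1
      have hdG : d ∈ vectorSpan ℝ G := (Submodule.mem_inf.1 hd).2
      obtain ⟨ε₁, hε₁, hm₁⟩ := relint_move hbF hdF
      obtain ⟨ε₂, hε₂, hm₂⟩ := relint_move hbG hdG
      set ε := min ε₁ ε₂ with hε
      have hε0 : 0 < ε := lt_min hε₁ hε₂
      have habs : ∀ t : ℝ, |t| ≤ ε → e + t • d ∈ P ∩ reflP z P := by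
        intro t ht
        constructor
        · exact argmaxSet_subset bG P (hm₂ t (le_trans ht (min_le_right _ _)))
        · rw [mem_reflP]
          have heq : (2:ℝ) • z - (e + t • d) = f + (-t) • d := by
            rw [hfdef]; module
          rw [heq]
          exact argmaxSet_subset bF P
            (hm₁ (-t) (by rw [abs_neg]; exact le_trans ht (min_le_left _ _)))
      have habs2 : ∀ t : ℝ, |t| ≤ ε → dot c (e + t • d) ≤ dot c e :=
        fun t ht => hemax.2 _ (habs t ht)
      have hd0 : dot c d = 0 := by
        have h1 := habs2 ε (by rw [abs_of_pos hε0])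
        have h2 := habs2 (-ε) (by rw [abs_neg, abs_of_pos hε0])
        rw [dot_add_right, dot_smul_right] at h1 h2
        nlinarith
      have hedE : e + ε • d ∈ E := by
        rw [hc']
        refine ⟨habs ε (by rw [abs_of_pos hε0]), fun y hy => ?_⟩
        rw [dot_add_right, dot_smul_right, hd0, mul_zero, add_zero]
        exact hemax.2 y hy
      have hvs : ε • d ∈ vectorSpan ℝ E := by
        have := vsub_mem_vectorSpan ℝ hedE heE
        have heq : (e + ε • d) -ᵥ e = ε • d := by
          show (e + ε • d) - e = ε • d
          abel
        rwa [heq] at this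
      have : d = ε⁻¹ • (ε • d) := by
        rw [smul_smul, inv_mul_cancel₀ (ne_of_gt hε0), one_smul]
      rw [this]
      exact Submodule.smul_mem _ _ hvs
    have heGF : e ∈ G ∩ reflP z F := ⟨heG, mem_reflP.2 (hfdef ▸ hfF)⟩
    -- E = G ∩ ρ_z F
    have hEeq : E = G ∩ reflP z F := by
      apply Set.Subset.antisymm
      · exact fun x hx => ⟨hEG hx, hErF hx⟩
      · intro x hx
        have hxQ : x ∈ P ∩ reflP z P := by
          refine ⟨argmaxSet_subset bG P hx.1, ?_⟩
          have := mem_reflP.1 hx.2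
          exact mem_reflP.2 (argmaxSet_subset bF P this)
        have hxd : x - e ∈ vectorSpan ℝ E := by
          apply hkey
          apply vectorSpan_inter_refl z F G
          rw [vectorSpan_def]
          exact Submodule.subset_span (Set.vsub_mem_vsub hx heGF)
        have hxspan : x ∈ affineSpan ℝ E := by
          have := AffineSubspace.vadd_mem_of_mem_direction
            (direction_affineSpan ℝ E ▸ hxd) (subset_affineSpan ℝ E heE)
          have heq : (x - e) +ᵥ e = x := by
            show (x - e) + e = x
            abel
          rwa [heq] at this
        have hconst : ∀ u ∈ E, dot c u = dot c e :=
          fun u hu => dot_eq_on_argmax (hc' ▸ hu) hemax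
        have hxval : dot c x = dot c e :=
          dot_const_on_affineSpan hconst heE x hxspan
        rw [hc']
        exact ⟨hxQ, fun y hy => hxval ▸ (hc' ▸ heE : e ∈ argmaxSet c _).2 y hy⟩
    -- vectorSpan equality
    have hvseq : vectorSpan ℝ F ⊓ vectorSpan ℝ G = vectorSpan ℝ E := by
      apply le_antisymm hkey
      rw [hEeq]
      exact vectorSpan_inter_refl z F G
    -- rank computation
    have hspan : Submodule.span ℝ (coneOf ((Neg.neg '' normalCone P F) ∪ normalCone P G))
        = perp (vectorSpan ℝ E) := by
      rw [span_coneOf_union, span_normalCone hS hfF, span_normalCone hS heG,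
        ← perp_inf, hvseq]
    have hrank : Module.finrank ℝ (Submodule.span ℝ
        (coneOf ((Neg.neg '' normalCone P F) ∪ normalCone P G))) + 1 = n := by
      rw [hspan]
      have h1 := finrank_perp_add (vectorSpan ℝ E)
      rw [sdim_vectorSpan] at hEdim
      generalize hA : Module.finrank ℝ ↥(perp (vectorSpan ℝ E)) = A at h1 ⊢
      generalize hB : Module.finrank ℝ ↥(vectorSpan ℝ E) = B at h1 hEdim
      omega
    refine ⟨F, G, ⟨bF, rfl⟩, ⟨bG, rfl⟩, ⟨f, hfF⟩, ⟨e, heG⟩, hrank, ?_, hEeq⟩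
    refine ⟨f, hbF, e, hbG, ?_⟩
    have h9 : f + e = (2:ℝ) • z := by rw [hfdef]; abel
    rw [h9, smul_smul]
    norm_num
end
end
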